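/- arXiv:2305.19605 — 4 statements merged into one kernel-verified Lean document; each statement's English description precedes it below -/
import Mathlib

section
/- For every integer T ≥ 1, the iterates of Free AdaGrad run with any positive non-decreasing sequence (h_t)_{t≥1} satisfy Σ_{t=1}^T (f(x_t) − f(x*)) ≤ h_{T+1} · ( 2‖x₁ − x*‖ · √(k_T) · ( 2 + √( (1/3) · Σ_{t=1}^T ‖g_t‖²/h_t² ) ) + γ_{k_T} · Σ_{t=1}^T ‖g_t‖²/h_t² ). -/
open scoped RealInnerProductSpace

lemma freeada_sum_inv_sqrt (n : ℕ) :
    ∑ j ∈ Finset.Icc 1 n, (1:ℝ)/Real.sqrt j ≤ 2 * Real.sqrt n := by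
  induction n with
  | zero => simp
  | succ m ih =>
    rw [Finset.sum_Icc_succ_top (by omega)]
    have h1 : Real.sqrt m ≤ Real.sqrt (m+1) := by
      apply Real.sqrt_le_sqrt; push_cast; linarith
    have h2 : (0:ℝ) < Real.sqrt (m+1) := by
      apply Real.sqrt_pos.2; positivity
    have h3 : Real.sqrt (m+1) ^ 2 = (m:ℝ)+1 := Real.sq_sqrt (by positivity)
    have h4 : Real.sqrt m ^ 2 = (m:ℝ) := Real.sq_sqrt (by positivity)
    have h5 : (1:ℝ)/Real.sqrt (m+1) ≤ 2 * Real.sqrt (m+1) - 2 * Real.sqrt m := by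
      rw [div_le_iff₀ h2]
      nlinarith [Real.sqrt_nonneg m, Real.sqrt_nonneg (m+1)]
    push_cast
    linarith

lemma freeada_proj_contract {E : Type*} [NormedAddCommGroup E] [InnerProductSpace ℝ E]
    {Θ : Set E} (hΘcv : Convex ℝ Θ)
    (proj : E → E) (hprojΘ : ∀ z, proj z ∈ Θ)
    (hproj : ∀ z, ∀ y ∈ Θ, ‖z - proj z‖ ≤ ‖z - y‖)
    (z : E) {y : E} (hy : y ∈ Θ) : ‖proj z - y‖ ≤ ‖z - y‖ := by
  haveI : Nonempty Θ := ⟨⟨proj z, hprojΘ z⟩⟩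
  have hvar : ∀ w ∈ Θ, ⟪z - proj z, w - proj z⟫ ≤ 0 := by
    rw [← norm_eq_iInf_iff_real_inner_le_zero hΘcv (hprojΘ z)]
    refine le_antisymm ?_ ?_
    · exact le_ciInf fun w => hproj z w w.2
    · refine ciInf_le ?_ (⟨proj z, hprojΘ z⟩ : Θ)
      refine ⟨0, ?_⟩
      rintro _ ⟨w, rfl⟩
      exact norm_nonneg _
  have h := hvar y hy
  have hid : ‖z - y‖^2 = ‖z - proj z‖^2 - 2*⟪z - proj z, y - proj z⟫ + ‖proj z - y‖^2 := by
    have : z - y = (z - proj z) - (y - proj z) := by abel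
    rw [this, norm_sub_sq_real, norm_sub_rev (proj z) y]
    try ring_nf
  have hsq : ‖proj z - y‖^2 ≤ ‖z - y‖^2 := by nlinarith [norm_nonneg (z - proj z)]
  nlinarith [norm_nonneg (z - y), norm_nonneg (proj z - y)]

lemma freeada_geom (N : ℕ) : ∑ l ∈ Finset.range N, ((1:ℝ)/4)^l ≤ 4/3 := by
  rw [geom_sum_eq (by norm_num)]
  have : ((1:ℝ)/4)^N ≥ 0 := by positivity
  rw [div_le_iff_of_neg (by norm_num)]
  nlinarith

lemma freeada_le_sqrt {a b : ℝ} (ha : 0 ≤ a) (hab : a^2 ≤ b) : a ≤ Real.sqrt b := by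
  calc a = Real.sqrt (a^2) := (Real.sqrt_sq ha).symm
  _ ≤ Real.sqrt b := Real.sqrt_le_sqrt hab

set_option maxHeartbeats 2000000 in
/-- meta regret bound for Free AdaGrad with any positive
non-decreasing step-size normalizing sequence `(h_t)`. -/
theorem free_adagrad_meta_regret
    {d : ℕ} {Θ : Set (EuclideanSpace ℝ (Fin d))}
    (hΘne : Θ.Nonempty) (hΘcl : IsClosed Θ) (hΘcv : Convex ℝ Θ)
    {f : EuclideanSpace ℝ (Fin d) → ℝ}
    (hfconv : ConvexOn ℝ Set.univ f)
    {xstar : EuclideanSpace ℝ (Fin d)} (hxstarΘ : xstar ∈ Θ)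
    (hmin : ∀ y ∈ Θ, f xstar ≤ f y)
    (proj : EuclideanSpace ℝ (Fin d) → EuclideanSpace ℝ (Fin d))
    (hprojΘ : ∀ z, proj z ∈ Θ)
    (hproj : ∀ z, ∀ y ∈ Θ, ‖z - proj z‖ ≤ ‖z - y‖)
    {γ₀ : ℝ} (hγ₀ : 0 < γ₀)
    (γ : ℕ → ℝ) (hγ : ∀ j, γ j = γ₀ * 2 ^ j)
    (h : ℕ → ℝ) (hhpos : ∀ t, 1 ≤ t → 0 < h t)
    (hhmono : ∀ s t, 1 ≤ s → s ≤ t → h s ≤ h t)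
    (x g : ℕ → EuclideanSpace ℝ (Fin d)) (k : ℕ → ℕ) (Γsq : ℕ → ℝ)
    (hx1Θ : x 1 ∈ Θ)
    (hg : ∀ t, 1 ≤ t → ∀ y, f (x t) + ⟪g t, y - x t⟫ ≤ f y)
    (hk0 : k 0 = 1) (hΓ1 : Γsq 1 = 0)
    (xplus : ℕ → ℕ → EuclideanSpace ℝ (Fin d))
    (hxplus : ∀ t j, 1 ≤ t → xplus t j = proj (x t - (γ j / h t) • g t))
    (B : ℕ → ℕ → ℝ)
    (hB : ∀ t j, 1 ≤ t → B t j =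
        2 * γ j / Real.sqrt j
          + Real.sqrt (Γsq t + γ j ^ 2 * ‖g t‖ ^ 2 / h t ^ 2))
    (hkmono : ∀ t, 1 ≤ t → k (t - 1) ≤ k t)
    (hksel : ∀ t, 1 ≤ t → ‖xplus t (k t) - x 1‖ ≤ B t (k t))
    (hkmin : ∀ t, 1 ≤ t → ∀ j, k (t - 1) ≤ j → j < k t →
        B t j < ‖xplus t j - x 1‖)
    (hxrec : ∀ t, 1 ≤ t → x (t + 1) = xplus t (k t))
    (hΓrec : ∀ t, 1 ≤ t → Γsq (t + 1) = Γsq t + γ (k t) ^ 2 * ‖g t‖ ^ 2 / h t ^ 2)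
    (T : ℕ) (hT : 1 ≤ T) :
    ∑ t ∈ Finset.Icc 1 T, (f (x t) - f xstar)
      ≤ h (T + 1) *
          (2 * ‖x 1 - xstar‖ * Real.sqrt (k T)
              * (2 + Real.sqrt ((1 / 3) * ∑ t ∈ Finset.Icc 1 T, ‖g t‖ ^ 2 / h t ^ 2))
            + γ (k T) * ∑ t ∈ Finset.Icc 1 T, ‖g t‖ ^ 2 / h t ^ 2) := by
  -- basic facts
  have hγpos : ∀ j, 0 < γ j := fun j => by rw [hγ j]; positivity
  have hγmono : ∀ i j, i ≤ j → γ i ≤ γ j := fun i j hij => by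
    rw [hγ i, hγ j]
    exact mul_le_mul_of_nonneg_left (pow_le_pow_right₀ (by norm_num) hij) hγ₀.le
  have hkm : Monotone k := monotone_nat_of_le_succ (fun t => by
    have := hkmono (t+1) (by omega); simpa using this)
  have hk1 : ∀ t, 1 ≤ k t := fun t => hk0 ▸ hkm (Nat.zero_le t)
  have hxΘ : ∀ t, 1 ≤ t → x t ∈ Θ := by
    intro t ht
    induction t with
    | zero => omega
    | succ s ih =>
      rcases Nat.eq_or_lt_of_le ht with h1 | h1
      · rw [← h1] at *; exact hx1Θ
      · rw [hxrec s (by omega), hxplus s (k s) (by omega)]; exact hprojΘ _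
  have hΓnn : ∀ t, 1 ≤ t → 0 ≤ Γsq t := by
    intro t ht
    induction t with
    | zero => omega
    | succ s ih =>
      rcases Nat.eq_or_lt_of_le ht with h1 | h1
      · rw [← h1, hΓ1]
      · have hs : 1 ≤ s := by omega
        rw [hΓrec s hs]
        have := hhpos s hs
        have := ih hs
        positivity
  have hΓsum : ∀ t, Γsq (t+1) = ∑ s ∈ Finset.Icc 1 t, γ (k s)^2 * ‖g s‖^2 / h s^2 := by
    intro t
    induction t with
    | zero => simpa using hΓ1
    | succ s ih =>
      rw [hΓrec (s+1) (by omega), ih, Finset.sum_Icc_succ_top (by omega)]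
  -- abbreviations
  set D1 : ℝ := ‖x 1 - xstar‖ with hD1def
  set S : ℝ := ∑ t ∈ Finset.Icc 1 T, ‖g t‖ ^ 2 / h t ^ 2 with hSdef
  set Dsq : ℕ → ℝ := fun t => ‖x t - xstar‖^2 with hDsqdef
  set b : ℕ → ℝ := fun t => 1/(2*γ (k t)) with hbdef
  have hSnn : 0 ≤ S := by
    rw [hSdef]; apply Finset.sum_nonneg; intro t _; positivity
  -- the per-step inequality
  have hstep : ∀ t, 1 ≤ t → t ≤ T →
      f (x t) - f xstar ≤ h (T+1) *
        (b t * (Dsq t - Dsq (t+1)) + γ (k t) * ‖g t‖^2 / (2 * h t^2)) := by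
    intro t ht htT
    have hht : 0 < h t := hhpos t ht
    have hγk : 0 < γ (k t) := hγpos (k t)
    have hhT1 : 0 < h (T+1) := hhpos (T+1) (by omega)
    have hhle : h t ≤ h (T+1) := hhmono t (T+1) ht (by omega)
    set c : ℝ := γ (k t) / h t with hcdef
    have hc : 0 < c := div_pos hγk hht
    have hx1 : x (t+1) = proj (x t - c • g t) := by rw [hxrec t ht, hxplus t (k t) ht]
    have hcontr : ‖x (t+1) - xstar‖ ≤ ‖(x t - c • g t) - xstar‖ := by
      rw [hx1]; exact freeada_proj_contract hΘcv proj hprojΘ hproj _ hxstarΘ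
    have hexp : ‖(x t - c • g t) - xstar‖^2
        = Dsq t - 2*c*⟪g t, x t - xstar⟫ + c^2*‖g t‖^2 := by
      have e1 : (x t - c • g t) - xstar = (x t - xstar) - c • g t := by abel
      rw [e1, norm_sub_sq_real, real_inner_smul_right, norm_smul, Real.norm_eq_abs,
        mul_pow, sq_abs, real_inner_comm]
      simp only [hDsqdef]
      ring
    have hDle : Dsq (t+1) ≤ Dsq t - 2*c*⟪g t, x t - xstar⟫ + c^2*‖g t‖^2 := by
      rw [← hexp]
      simp only [hDsqdef]
      exact pow_le_pow_left₀ (norm_nonneg _) hcontr 2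
    have hsub : f (x t) - f xstar ≤ ⟪g t, x t - xstar⟫ := by
      have h1 := hg t ht xstar
      have e : xstar - x t = -(x t - xstar) := by abel
      rw [e, inner_neg_right] at h1
      linarith
    have hfnn : 0 ≤ f (x t) - f xstar := sub_nonneg.2 (hmin _ (hxΘ t ht))
    have key : ⟪g t, x t - xstar⟫
        ≤ h t/(2*γ (k t)) * (Dsq t - Dsq (t+1)) + γ (k t)/(2*h t) * ‖g t‖^2 := by
      have h2 : 2*c*⟪g t, x t - xstar⟫ ≤ (Dsq t - Dsq (t+1)) + c^2*‖g t‖^2 := by linarith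
      calc ⟪g t, x t - xstar⟫ = (2*c*⟪g t, x t - xstar⟫)/(2*c) := by field_simp
      _ ≤ ((Dsq t - Dsq (t+1)) + c^2*‖g t‖^2)/(2*c) := by gcongr
      _ = h t/(2*γ (k t)) * (Dsq t - Dsq (t+1)) + γ (k t)/(2*h t) * ‖g t‖^2 := by
          rw [hcdef]; field_simp
    calc f (x t) - f xstar ≤ (h (T+1)/h t) * (f (x t) - f xstar) :=
          le_mul_of_one_le_left hfnn ((one_le_div hht).2 hhle)
    _ ≤ (h (T+1)/h t) * (h t/(2*γ (k t)) * (Dsq t - Dsq (t+1)) + γ (k t)/(2*h t) * ‖g t‖^2) :=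
        mul_le_mul_of_nonneg_left (le_trans hsub key) (by positivity)
    _ = h (T+1) * (b t * (Dsq t - Dsq (t+1)) + γ (k t) * ‖g t‖^2 / (2 * h t^2)) := by
        rw [hbdef]; field_simp
  -- bound on distance of iterates to x 1
  have hu : ∀ t, 1 ≤ t → ‖x (t+1) - x 1‖ ≤
      2 * γ (k t) / Real.sqrt (k t) + Real.sqrt (Γsq (t+1)) := by
    intro t ht
    have h1 := hksel t ht
    rw [hB t (k t) ht, ← hxrec t ht, ← hΓrec t ht] at h1
    exact h1
  -- E bound
  have hE : ∀ t, 1 ≤ t → Dsq 1 - Dsq t ≤ 2 * D1 * ‖x t - x 1‖ := by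
    intro t ht
    have htri : D1 ≤ ‖x t - xstar‖ + ‖x t - x 1‖ := by
      rw [hD1def]
      calc ‖x 1 - xstar‖ = ‖(x t - xstar) - (x t - x 1)‖ := by congr 1; abel
      _ ≤ ‖x t - xstar‖ + ‖x t - x 1‖ := norm_sub_le _ _
    have h1 : 0 ≤ D1 := norm_nonneg _
    have h2 : 0 ≤ ‖x t - xstar‖ := norm_nonneg _
    simp only [hDsqdef, hD1def] at *
    nlinarith [sq_nonneg (‖x 1 - xstar‖ - ‖x t - xstar‖)]
  -- Abel summation identity
  have habel : ∀ n, 1 ≤ n →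
      ∑ t ∈ Finset.Icc 1 n, b t * (Dsq t - Dsq (t+1))
        = b n * (Dsq 1 - Dsq (n+1))
          + ∑ t ∈ Finset.Icc 2 n, (b (t-1) - b t) * (Dsq 1 - Dsq t) := by
    intro n hn
    induction n, hn using Nat.le_induction with
    | base => simp
    | succ m hm ih =>
      rw [Finset.sum_Icc_succ_top (by omega : 1 ≤ m + 1),
        Finset.sum_Icc_succ_top (by omega : 2 ≤ m + 1), ih]
      simp only [Nat.add_sub_cancel]
      ring
  -- jump set
  set J : Finset ℕ := (Finset.Icc 2 T).filter (fun t => k (t-1) < k t) with hJdef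
  set I : Finset ℕ := insert (T+1) J with hIdef
  have hJmem : ∀ t ∈ J, 2 ≤ t ∧ t ≤ T ∧ k (t-1) < k t := by
    intro t htJ
    rw [hJdef] at htJ
    have h1 := Finset.mem_Icc.1 (Finset.mem_filter.1 htJ).1
    exact ⟨h1.1, h1.2, (Finset.mem_filter.1 htJ).2⟩
  have hTnotJ : (T+1) ∉ J := by
    intro hmem
    have := hJmem _ hmem
    omega
  have hImem : ∀ t ∈ I, 2 ≤ t ∧ t ≤ T + 1 := by
    intro t htI
    rcases Finset.mem_insert.1 htI with h1 | h1
    · omega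
    · have := hJmem t h1; omega
  have hkTle : ∀ t ∈ I, k (t-1) ≤ k T := by
    intro t htI
    rcases Finset.mem_insert.1 htI with h1 | h1
    · subst h1; simp
    · obtain ⟨h2, h3, h4⟩ := hJmem t h1
      have : k t ≤ k T := hkm h3
      omega
  have hstrict : ∀ s ∈ I, ∀ t ∈ I, s < t → k (s-1) < k (t-1) := by
    intro s hs t htI hst
    have htm := hImem t htI
    have hsJ : s ∈ J := by
      rcases Finset.mem_insert.1 hs with h1 | h1
      · omega
      · exact h1
    obtain ⟨hs2, hsT, h1⟩ := hJmem s hsJ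
    have h2 : k s ≤ k (t-1) := hkm (by omega)
    omega
  have hinj : Set.InjOn (fun t => k (t-1)) I := by
    intro a ha b hb hab
    by_contra hne
    rcases lt_or_gt_of_ne hne with h1 | h1
    · exact absurd hab (Nat.ne_of_lt (hstrict a ha b hb h1))
    · exact absurd hab.symm (Nat.ne_of_lt (hstrict b hb a ha h1))
  have himage : I.image (fun t => k (t-1)) ⊆ Finset.Icc 1 (k T) := by
    intro j hj
    rcases Finset.mem_image.1 hj with ⟨t, htI, rfl⟩
    exact Finset.mem_Icc.2 ⟨hk1 _, hkTle t htI⟩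
  have hcard : I.card ≤ k T := by
    rw [← Finset.card_image_of_injOn hinj]
    calc _ ≤ (Finset.Icc 1 (k T)).card := Finset.card_le_card himage
    _ = k T := by rw [Nat.card_Icc]; omega
  -- the P bound
  have hP : ∑ t ∈ I, (1:ℝ)/Real.sqrt (k (t-1)) ≤ 2 * Real.sqrt (k T) := by
    have e := Finset.sum_image (s := I) (f := fun j : ℕ => (1:ℝ)/Real.sqrt j)
      (g := fun t => k (t-1)) (fun p hp q hq => hinj hp hq)
    rw [← e]
    calc ∑ j ∈ I.image (fun t => k (t-1)), (1:ℝ)/Real.sqrt j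
        ≤ ∑ j ∈ Finset.Icc 1 (k T), (1:ℝ)/Real.sqrt j :=
          Finset.sum_le_sum_of_subset_of_nonneg himage (fun j _ _ => by positivity)
    _ ≤ 2 * Real.sqrt (k T) := freeada_sum_inv_sqrt (k T)
  -- the Q bound
  have hq2 : ∑ t ∈ I, (Real.sqrt (Γsq t)/(2*γ (k (t-1))))^2 ≤ (1/3) * S := by
    have hterm : ∀ t ∈ I, (Real.sqrt (Γsq t)/(2*γ (k (t-1))))^2
        = ∑ s ∈ Finset.Icc 1 T,
            (if s ≤ t - 1 then γ (k s)^2/(4*γ (k (t-1))^2) * (‖g s‖^2/h s^2) else 0) := by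
      intro t htI
      obtain ⟨ht2, htT⟩ := hImem t htI
      have ht1 : t - 1 + 1 = t := by omega
      have hΓt : Γsq t = ∑ s ∈ Finset.Icc 1 (t-1), γ (k s)^2 * ‖g s‖^2 / h s^2 := by
        conv_lhs => rw [← ht1]
        exact hΓsum (t-1)
      have hfilter : (Finset.Icc 1 T).filter (fun s => s ≤ t - 1) = Finset.Icc 1 (t-1) := by
        ext s
        simp only [Finset.mem_filter, Finset.mem_Icc]
        omega
      rw [← Finset.sum_filter, hfilter, div_pow, Real.sq_sqrt (hΓnn t (by omega)), hΓt,
        Finset.sum_div]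
      apply Finset.sum_congr rfl
      intro s hsmem
      have hs1 : 1 ≤ s := (Finset.mem_Icc.1 hsmem).1
      have h1 : h s ≠ 0 := ne_of_gt (hhpos s hs1)
      have h2 : γ (k (t-1)) ≠ 0 := ne_of_gt (hγpos _)
      field_simp
      try ring
      try exact Or.inl trivial
    have hinner : ∀ s ∈ Finset.Icc 1 T,
        ∑ t ∈ I, (if s ≤ t - 1 then γ (k s)^2/(4*γ (k (t-1))^2) * (‖g s‖^2/h s^2) else 0)
          ≤ (1/3) * (‖g s‖^2/h s^2) := by
      intro s hs
      have hw : (0:ℝ) ≤ ‖g s‖^2/h s^2 := by positivity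
      rw [← Finset.sum_filter]
      set I' := I.filter (fun t => s ≤ t - 1) with hI'def
      have hsub' : I' ⊆ I := Finset.filter_subset _ _
      rw [← Finset.sum_mul]
      refine mul_le_mul_of_nonneg_right ?_ hw
      have hcoeff : ∀ t ∈ I', γ (k s)^2/(4*γ (k (t-1))^2) = (1/4) * ((1/4:ℝ))^(k (t-1) - k s) := by
        intro t htI'
        have hst : s ≤ t - 1 := (Finset.mem_filter.1 htI').2
        have hks : k s ≤ k (t-1) := hkm hst
        have e : k (t-1) = k s + (k (t-1) - k s) := by omega
        have eγ : γ (k (t-1)) = γ (k s) * 2^(k (t-1) - k s) := by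
          rw [hγ (k s), hγ (k (t-1))]
          conv_lhs => rw [e]
          rw [pow_add]
          ring
        have hγs : γ (k s) ≠ 0 := ne_of_gt (hγpos _)
        have h2m : ((2:ℝ)^(k (t-1) - k s)) ≠ 0 := by positivity
        have h4 : ((4:ℝ))^(k (t-1) - k s) = ((2:ℝ)^(k (t-1) - k s))^2 := by
          rw [pow_two, ← mul_pow]
          norm_num
        rw [eγ, mul_pow, div_pow, one_pow, h4]
        field_simp
      rw [Finset.sum_congr rfl hcoeff, ← Finset.mul_sum]
      have hinj' : Set.InjOn (fun t => k (t-1) - k s) I' := by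
        intro p hp q hq hpq
        have hpI := Finset.mem_filter.1 hp
        have hqI := Finset.mem_filter.1 hq
        have hkp : k s ≤ k (p-1) := hkm hpI.2
        have hkq : k s ≤ k (q-1) := hkm hqI.2
        have hpq' : k (p-1) - k s = k (q-1) - k s := hpq
        have : k (p-1) = k (q-1) := by omega
        exact hinj hpI.1 hqI.1 this
      have e := Finset.sum_image (s := I') (f := fun l : ℕ => ((1/4:ℝ))^l)
        (g := fun t => k (t-1) - k s) (fun p hp q hq => hinj' hp hq)
      have himg' : I'.image (fun t => k (t-1) - k s) ⊆ Finset.range (k T + 1) := by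
        intro l hl
        rcases Finset.mem_image.1 hl with ⟨t, htI', rfl⟩
        have := hkTle t (hsub' htI')
        exact Finset.mem_range.2 (by omega)
      calc (1/4) * ∑ t ∈ I', ((1/4:ℝ))^(k (t-1) - k s)
          = (1/4) * ∑ l ∈ I'.image (fun t => k (t-1) - k s), ((1/4:ℝ))^l := by rw [← e]
      _ ≤ (1/4) * ∑ l ∈ Finset.range (k T + 1), ((1/4:ℝ))^l := by
          apply mul_le_mul_of_nonneg_left ?_ (by norm_num)
          exact Finset.sum_le_sum_of_subset_of_nonneg himg' (fun l _ _ => by positivity)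
      _ ≤ (1/4) * (4/3) := by
          apply mul_le_mul_of_nonneg_left (freeada_geom _) (by norm_num)
      _ = 1/3 := by norm_num
    calc ∑ t ∈ I, (Real.sqrt (Γsq t)/(2*γ (k (t-1))))^2
        = ∑ t ∈ I, ∑ s ∈ Finset.Icc 1 T,
            (if s ≤ t - 1 then γ (k s)^2/(4*γ (k (t-1))^2) * (‖g s‖^2/h s^2) else 0) :=
          Finset.sum_congr rfl hterm
    _ = ∑ s ∈ Finset.Icc 1 T, ∑ t ∈ I,
            (if s ≤ t - 1 then γ (k s)^2/(4*γ (k (t-1))^2) * (‖g s‖^2/h s^2) else 0) :=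
          Finset.sum_comm
    _ ≤ ∑ s ∈ Finset.Icc 1 T, (1/3) * (‖g s‖^2/h s^2) := Finset.sum_le_sum hinner
    _ = (1/3) * S := by rw [hSdef, Finset.mul_sum]
  have hQnn : (0:ℝ) ≤ ∑ t ∈ I, Real.sqrt (Γsq t)/(2*γ (k (t-1))) :=
    Finset.sum_nonneg fun t _ =>
      div_nonneg (Real.sqrt_nonneg _) (by linarith [hγpos (k (t-1))])
  have hQ : ∑ t ∈ I, Real.sqrt (Γsq t)/(2*γ (k (t-1)))
      ≤ Real.sqrt ((k T) * ((1/3)*S)) := by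
    apply freeada_le_sqrt hQnn
    have hcs := Finset.sum_mul_sq_le_sq_mul_sq I (fun _ => (1:ℝ))
      (fun t => Real.sqrt (Γsq t)/(2*γ (k (t-1))))
    simp only [one_mul, one_pow] at hcs
    calc (∑ t ∈ I, Real.sqrt (Γsq t)/(2*γ (k (t-1))))^2
        ≤ (∑ _t ∈ I, (1:ℝ)) * ∑ t ∈ I, (Real.sqrt (Γsq t)/(2*γ (k (t-1))))^2 := hcs
    _ = I.card * ∑ t ∈ I, (Real.sqrt (Γsq t)/(2*γ (k (t-1))))^2 := by
        rw [Finset.sum_const, nsmul_eq_mul, mul_one]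
    _ ≤ (k T) * ((1/3)*S) := by
        apply mul_le_mul ?_ hq2 ?_ (Nat.cast_nonneg _)
        · exact_mod_cast hcard
        · exact Finset.sum_nonneg fun t _ => sq_nonneg _
  -- the Abel bound
  have hbpos : ∀ t, 0 < b t := fun t => by
    simp only [hbdef]
    have := hγpos (k t)
    positivity
  have hbanti : ∀ p q, p ≤ q → b q ≤ b p := by
    intro p q hpq
    have h1 : 0 < 2*γ (k p) := by linarith [hγpos (k p)]
    have h2 : 2*γ (k p) ≤ 2*γ (k q) := by
      have := hγmono (k p) (k q) (hkm hpq)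
      linarith
    simp only [hbdef]
    exact one_div_le_one_div_of_le h1 h2
  have hD1nn : 0 ≤ D1 := norm_nonneg _
  have hF : ∀ t ∈ I, b (t-1) * (2 * D1 * ‖x t - x 1‖)
      ≤ 2 * D1 * (1/Real.sqrt (k (t-1)) + Real.sqrt (Γsq t)/(2*γ (k (t-1)))) := by
    intro t htI
    obtain ⟨ht2, htT1⟩ := hImem t htI
    have ht1 : t - 1 + 1 = t := by omega
    have hub : ‖x t - x 1‖ ≤ 2*γ (k (t-1))/Real.sqrt (k (t-1)) + Real.sqrt (Γsq t) := by
      have h1 := hu (t-1) (by omega)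
      rw [ht1] at h1
      exact h1
    have hγp := hγpos (k (t-1))
    have hsp : (0:ℝ) < Real.sqrt (k (t-1)) := Real.sqrt_pos.2 (by
      have := hk1 (t-1)
      exact_mod_cast Nat.cast_pos.2 (by omega))
    have e : 2 * D1 * (1/Real.sqrt (k (t-1)) + Real.sqrt (Γsq t)/(2*γ (k (t-1))))
        = b (t-1) * (2*D1*(2*γ (k (t-1))/Real.sqrt (k (t-1)) + Real.sqrt (Γsq t))) := by
      have hsne : Real.sqrt ((k (t-1) : ℕ)) ≠ 0 := ne_of_gt hsp
      have hγne : γ (k (t-1)) ≠ 0 := ne_of_gt hγp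
      simp only [hbdef]
      field_simp
      try ring
      try exact Or.inl trivial
    rw [e]
    apply mul_le_mul_of_nonneg_left ?_ (hbpos (t-1)).le
    apply mul_le_mul_of_nonneg_left hub (by positivity)
  have hAbound : ∑ t ∈ Finset.Icc 1 T, b t * (Dsq t - Dsq (t+1))
      ≤ 2 * D1 * ((∑ t ∈ I, 1/Real.sqrt (k (t-1)))
          + ∑ t ∈ I, Real.sqrt (Γsq t)/(2*γ (k (t-1)))) := by
    rw [habel T hT]
    have hJsum : ∑ t ∈ Finset.Icc 2 T, (b (t-1) - b t) * (Dsq 1 - Dsq t)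
        = ∑ t ∈ J, (b (t-1) - b t) * (Dsq 1 - Dsq t) := by
      rw [hJdef]
      refine (Finset.sum_filter_of_ne ?_).symm
      intro t htmem hne
      by_contra hnot
      have h1 : k (t-1) ≤ k t := hkm (by omega)
      have h2 : k (t-1) = k t := by omega
      apply hne
      rw [hbdef]
      simp [h2]
    rw [hJsum]
    have step1 : b T * (Dsq 1 - Dsq (T+1)) + ∑ t ∈ J, (b (t-1) - b t) * (Dsq 1 - Dsq t)
        ≤ ∑ t ∈ I, b (t-1) * (2 * D1 * ‖x t - x 1‖) := by
      rw [hIdef, Finset.sum_insert hTnotJ]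
      have e1 : (T+1) - 1 = T := by omega
      rw [e1]
      apply add_le_add
      · calc b T * (Dsq 1 - Dsq (T+1)) ≤ b T * (2 * D1 * ‖x (T+1) - x 1‖) :=
            mul_le_mul_of_nonneg_left (hE (T+1) (by omega)) (hbpos T).le
        _ = b T * (2 * D1 * ‖x (T+1) - x 1‖) := rfl
      · apply Finset.sum_le_sum
        intro t htJ
        obtain ⟨ht2, htT, hklt⟩ := hJmem t htJ
        have hc1 : 0 ≤ b (t-1) - b t := sub_nonneg.2 (hbanti (t-1) t (by omega))
        have hc2 : b (t-1) - b t ≤ b (t-1) := by linarith [hbpos t]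
        have hxnn : (0:ℝ) ≤ 2 * D1 * ‖x t - x 1‖ := by positivity
        calc (b (t-1) - b t) * (Dsq 1 - Dsq t)
            ≤ (b (t-1) - b t) * (2 * D1 * ‖x t - x 1‖) :=
              mul_le_mul_of_nonneg_left (hE t (by omega)) hc1
        _ ≤ b (t-1) * (2 * D1 * ‖x t - x 1‖) := mul_le_mul_of_nonneg_right hc2 hxnn
    calc b T * (Dsq 1 - Dsq (T+1)) + ∑ t ∈ J, (b (t-1) - b t) * (Dsq 1 - Dsq t)
        ≤ ∑ t ∈ I, b (t-1) * (2 * D1 * ‖x t - x 1‖) := step1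
    _ ≤ ∑ t ∈ I, 2 * D1 * (1/Real.sqrt (k (t-1)) + Real.sqrt (Γsq t)/(2*γ (k (t-1)))) :=
        Finset.sum_le_sum hF
    _ = 2 * D1 * ((∑ t ∈ I, 1/Real.sqrt (k (t-1)))
          + ∑ t ∈ I, Real.sqrt (Γsq t)/(2*γ (k (t-1)))) := by
        rw [mul_add, Finset.mul_sum, Finset.mul_sum, ← Finset.sum_add_distrib]
        apply Finset.sum_congr rfl
        intro t _
        ring
  -- second sum bound
  have hsum2 : ∑ t ∈ Finset.Icc 1 T, γ (k t) * ‖g t‖^2 / (2 * h t^2) ≤ γ (k T) * S := by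
    rw [hSdef, Finset.mul_sum]
    apply Finset.sum_le_sum
    intro t htmem
    obtain ⟨ht1, htT⟩ := Finset.mem_Icc.1 htmem
    have hht : 0 < h t := hhpos t ht1
    have hγle : γ (k t) ≤ γ (k T) := hγmono _ _ (hkm htT)
    rw [mul_div_assoc]
    apply mul_le_mul hγle ?_ (by positivity) (hγpos _).le
    apply div_le_div_of_nonneg_left (by positivity) (by positivity)
    linarith [sq_nonneg (h t)]
  -- sum up the per-step inequalities
  have hhT1 : 0 < h (T+1) := hhpos (T+1) (by omega)
  have hsum1 : ∑ t ∈ Finset.Icc 1 T, (f (x t) - f xstar)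
      ≤ h (T+1) * ((∑ t ∈ Finset.Icc 1 T, b t * (Dsq t - Dsq (t+1)))
          + ∑ t ∈ Finset.Icc 1 T, γ (k t) * ‖g t‖^2 / (2 * h t^2)) := by
    calc ∑ t ∈ Finset.Icc 1 T, (f (x t) - f xstar)
        ≤ ∑ t ∈ Finset.Icc 1 T, h (T+1) *
            (b t * (Dsq t - Dsq (t+1)) + γ (k t) * ‖g t‖^2 / (2 * h t^2)) := by
          apply Finset.sum_le_sum
          intro t htmem
          obtain ⟨ht1, htT⟩ := Finset.mem_Icc.1 htmem
          exact hstep t ht1 htT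
    _ = h (T+1) * ((∑ t ∈ Finset.Icc 1 T, b t * (Dsq t - Dsq (t+1)))
          + ∑ t ∈ Finset.Icc 1 T, γ (k t) * ‖g t‖^2 / (2 * h t^2)) := by
        rw [← Finset.mul_sum, Finset.sum_add_distrib]
  -- final assembly
  have hsqrt_split : Real.sqrt ((k T) * ((1/3)*S))
      = Real.sqrt (k T) * Real.sqrt ((1/3)*S) := Real.sqrt_mul (Nat.cast_nonneg _) _
  calc ∑ t ∈ Finset.Icc 1 T, (f (x t) - f xstar)
      ≤ h (T+1) * ((∑ t ∈ Finset.Icc 1 T, b t * (Dsq t - Dsq (t+1)))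
          + ∑ t ∈ Finset.Icc 1 T, γ (k t) * ‖g t‖^2 / (2 * h t^2)) := hsum1
  _ ≤ h (T+1) * (2 * D1 * ((∑ t ∈ I, 1/Real.sqrt (k (t-1)))
          + ∑ t ∈ I, Real.sqrt (Γsq t)/(2*γ (k (t-1)))) + γ (k T) * S) := by
      apply mul_le_mul_of_nonneg_left (add_le_add hAbound hsum2) hhT1.le
  _ ≤ h (T+1) * (2 * D1 * (2 * Real.sqrt (k T) + Real.sqrt ((k T) * ((1/3)*S)))
        + γ (k T) * S) := by
      apply mul_le_mul_of_nonneg_left ?_ hhT1.le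
      apply add_le_add_left
      apply mul_le_mul_of_nonneg_left (add_le_add hP hQ) (by positivity)
  _ = h (T+1) * (2 * D1 * Real.sqrt (k T) * (2 + Real.sqrt ((1/3)*S)) + γ (k T) * S) := by
      rw [hsqrt_split]
      ring
end

section
/- Let k* ≥ 1 be an integer such that γ₀·2^{k*−1} ≤ max(‖x₁ − x*‖, γ₀) ≤ γ₀·2^{k*}. Then for every integer T ≥ 2, the Free AdaGrad iterates (run with any positive non-decreasing sequence (h_t)) satisfy k_T ≤ k* + (1/2)·log₂(k*) + 5/4 and γ_{k_T} ≤ (5/2)·√(k*)·γ₀·2^{k*}. Moreover k_T = 1 whenever k* = 1. -/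
open scoped RealInnerProductSpace

lemma fa_aux_pow (n : ℕ) (hn : 1 ≤ n) : (n : ℝ) ≤ (29/100) * 4 ^ n := by
  induction n with
  | zero => omega
  | succ m ih =>
    rcases Nat.eq_or_lt_of_le hn with h1 | h1
    · norm_num [← h1]
    · have hm : 1 ≤ m := by omega
      have := ih hm
      have h4 : ((29:ℝ)/100) * 4 ^ (m+1) = 4 * ((29/100) * 4 ^ m) := by ring
      have hmr : (1:ℝ) ≤ (m:ℝ) := by exact_mod_cast hm
      push_cast
      rw [h4]
      nlinarith

lemma fa_aux_main (m kstar : ℕ) (hm : 1 ≤ m) (hk : 1 ≤ kstar)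
    (hlt : (2:ℝ) ^ m < 2 ^ kstar * Real.sqrt m) :
    (m : ℝ) ≤ kstar + (1/2) * Real.logb 2 kstar + 1/4 ∧ (m : ℝ) ≤ (25/16) * kstar := by
  have hkr : (1:ℝ) ≤ (kstar:ℝ) := by exact_mod_cast hk
  have hlogb : (0:ℝ) ≤ Real.logb 2 kstar := Real.logb_nonneg one_lt_two hkr
  by_cases hmk : m ≤ kstar
  · have : (m:ℝ) ≤ (kstar:ℝ) := by exact_mod_cast hmk
    constructor <;> nlinarith
  · push_neg at hmk
    set n := m - kstar with hn
    have hn1 : 1 ≤ n := by omega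
    have hmkn : m = kstar + n := by omega
    have h2k : (0:ℝ) < 2 ^ kstar := by positivity
    have h2n : (2:ℝ) ^ n < Real.sqrt m := by
      have : (2:ℝ) ^ m = 2 ^ kstar * 2 ^ n := by rw [hmkn, pow_add]
      rw [this] at hlt
      exact lt_of_mul_lt_mul_left hlt (le_of_lt h2k)
    have h4n : (4:ℝ) ^ n < m := by
      have hs : Real.sqrt m * Real.sqrt m = m := Real.mul_self_sqrt (by positivity)
      have h2nn : (0:ℝ) ≤ 2 ^ n := by positivity
      calc (4:ℝ) ^ n = 2 ^ n * 2 ^ n := by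
            rw [← pow_add, show (4:ℝ) = 2^(2:ℕ) by norm_num, ← pow_mul, Nat.two_mul]
        _ < Real.sqrt m * Real.sqrt m := by
            exact mul_lt_mul' (le_of_lt h2n) h2n h2nn (lt_of_le_of_lt h2nn h2n)
        _ = m := hs
    have hn29 : (n:ℝ) ≤ (29/100) * 4 ^ n := fa_aux_pow n hn1
    have hmr : (m:ℝ) = kstar + n := by exact_mod_cast hmkn
    have hkey : (71/100) * (4:ℝ) ^ n < kstar := by linarith
    have h4lt : (4:ℝ) ^ n < (100/71) * kstar := by linarith
    constructor
    · have hsqrt2 : (100:ℝ)/71 ≤ Real.sqrt 2 := by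
        rw [show (100:ℝ)/71 = Real.sqrt ((100/71)^2) by rw [Real.sqrt_sq (by norm_num)]]
        exact Real.sqrt_le_sqrt (by norm_num)
      have h4lt2 : (4:ℝ) ^ n < Real.sqrt 2 * kstar := by nlinarith
      have hlog : Real.logb 2 ((4:ℝ)^n) < Real.logb 2 (Real.sqrt 2 * kstar) :=
        Real.logb_lt_logb one_lt_two (by positivity) h4lt2
      have hL : Real.logb 2 ((4:ℝ)^n) = 2 * n := by
        rw [Real.logb_pow]
        rw [show (4:ℝ) = 2^(2:ℕ) by norm_num, Real.logb_pow,
          Real.logb_self_eq_one (by norm_num)]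
        push_cast; ring
      have hR : Real.logb 2 (Real.sqrt 2 * kstar) = 1/2 + Real.logb 2 kstar := by
        rw [Real.logb_mul (by positivity) (by positivity)]
        congr 1
        rw [show Real.sqrt 2 = (2:ℝ) ^ ((1:ℝ)/2) by rw [Real.sqrt_eq_rpow]]
        exact Real.logb_rpow (by norm_num) (by norm_num)
      rw [hL, hR] at hlog
      linarith
    · have : (n:ℝ) < (29/100) * ((100/71) * kstar) := by nlinarith
      nlinarith

set_option maxHeartbeats 1000000 in
/-- bound on the number of doubling phases of Free AdaGrad. -/
theorem free_adagrad_number_of_phases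
    {d : ℕ} {Θ : Set (EuclideanSpace ℝ (Fin d))}
    (hΘne : Θ.Nonempty) (hΘcl : IsClosed Θ) (hΘcv : Convex ℝ Θ)
    {f : EuclideanSpace ℝ (Fin d) → ℝ}
    (hfconv : ConvexOn ℝ Set.univ f)
    {xstar : EuclideanSpace ℝ (Fin d)} (hxstarΘ : xstar ∈ Θ)
    (hmin : ∀ y ∈ Θ, f xstar ≤ f y)
    (proj : EuclideanSpace ℝ (Fin d) → EuclideanSpace ℝ (Fin d))
    (hprojΘ : ∀ z, proj z ∈ Θ)
    (hproj : ∀ z, ∀ y ∈ Θ, ‖z - proj z‖ ≤ ‖z - y‖)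
    {γ₀ : ℝ} (hγ₀ : 0 < γ₀)
    (γ : ℕ → ℝ) (hγ : ∀ j, γ j = γ₀ * 2 ^ j)
    (h : ℕ → ℝ) (hhpos : ∀ t, 1 ≤ t → 0 < h t)
    (hhmono : ∀ s t, 1 ≤ s → s ≤ t → h s ≤ h t)
    (x g : ℕ → EuclideanSpace ℝ (Fin d)) (k : ℕ → ℕ) (Γsq : ℕ → ℝ)
    (hx1Θ : x 1 ∈ Θ)
    (hg : ∀ t, 1 ≤ t → ∀ y, f (x t) + ⟪g t, y - x t⟫ ≤ f y)
    (hk0 : k 0 = 1) (hΓ1 : Γsq 1 = 0)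
    (xplus : ℕ → ℕ → EuclideanSpace ℝ (Fin d))
    (hxplus : ∀ t j, 1 ≤ t → xplus t j = proj (x t - (γ j / h t) • g t))
    (B : ℕ → ℕ → ℝ)
    (hB : ∀ t j, 1 ≤ t → B t j =
        2 * γ j / Real.sqrt j
          + Real.sqrt (Γsq t + γ j ^ 2 * ‖g t‖ ^ 2 / h t ^ 2))
    (hkmono : ∀ t, 1 ≤ t → k (t - 1) ≤ k t)
    (hksel : ∀ t, 1 ≤ t → ‖xplus t (k t) - x 1‖ ≤ B t (k t))
    (hkmin : ∀ t, 1 ≤ t → ∀ j, k (t - 1) ≤ j → j < k t →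
        B t j < ‖xplus t j - x 1‖)
    (hxrec : ∀ t, 1 ≤ t → x (t + 1) = xplus t (k t))
    (hΓrec : ∀ t, 1 ≤ t → Γsq (t + 1) = Γsq t + γ (k t) ^ 2 * ‖g t‖ ^ 2 / h t ^ 2)
    (kstar : ℕ) (hkstar1 : 1 ≤ kstar)
    (hkstar_lb : γ₀ * 2 ^ (kstar - 1) ≤ max ‖x 1 - xstar‖ γ₀)
    (hkstar_ub : max ‖x 1 - xstar‖ γ₀ ≤ γ₀ * 2 ^ kstar)
    (T : ℕ) (hT : 2 ≤ T) :
    (k T : ℝ) ≤ kstar + (1 / 2) * Real.logb 2 kstar + 5 / 4 ∧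
      γ (k T) ≤ (5 / 2) * Real.sqrt kstar * (γ₀ * 2 ^ kstar) ∧
      (kstar = 1 → k T = 1) := by
  classical
  set D := max ‖x 1 - xstar‖ γ₀ with hD
  have hD0 : 0 < D := lt_of_lt_of_le hγ₀ (le_max_right _ _)
  have hkr : (1:ℝ) ≤ (kstar:ℝ) := by exact_mod_cast hkstar1
  have hlogb0 : (0:ℝ) ≤ Real.logb 2 kstar := Real.logb_nonneg one_lt_two hkr
  have hsk1 : (1:ℝ) ≤ Real.sqrt kstar := by
    rw [show (1:ℝ) = Real.sqrt 1 from Real.sqrt_one.symm]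
    exact Real.sqrt_le_sqrt hkr
  -- obtuse angle property of projection
  have obtuse : ∀ z, ∀ y ∈ Θ, ⟪z - proj z, y - proj z⟫ ≤ 0 := by
    intro z y hy
    haveI : Nonempty Θ := hΘne.to_subtype
    have hbdd : BddBelow (Set.range fun w : Θ => ‖z - (w : EuclideanSpace ℝ (Fin d))‖) :=
      ⟨0, by rintro _ ⟨w, rfl⟩; exact norm_nonneg _⟩
    have hinf : ‖z - proj z‖ = ⨅ w : Θ, ‖z - (w : EuclideanSpace ℝ (Fin d))‖ :=
      le_antisymm (le_ciInf fun w => hproj z w w.2) (ciInf_le hbdd ⟨proj z, hprojΘ z⟩)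
    exact (norm_eq_iInf_iff_real_inner_le_zero hΘcv (hprojΘ z)).mp hinf y hy
  -- projection decreases distance to points of Θ
  have projdec : ∀ z, ∀ y ∈ Θ, ‖proj z - y‖^2 ≤ ‖z - y‖^2 := by
    intro z y hy
    have h1 := obtuse z y hy
    have hexp : ‖z - y‖^2
        = ‖z - proj z‖^2 + 2*⟪z - proj z, proj z - y⟫ + ‖proj z - y‖^2 := by
      rw [show z - y = (z - proj z) + (proj z - y) by abel]
      exact norm_add_sq_real _ _
    have h2 : 0 ≤ ⟪z - proj z, proj z - y⟫ := by
      have heq : ⟪z - proj z, proj z - y⟫ = -⟪z - proj z, y - proj z⟫ := by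
        rw [← inner_neg_right]; congr 1; abel
      rw [heq]; linarith
    nlinarith [sq_nonneg ‖z - proj z‖]
  -- iterates stay in Θ
  have hxΘ : ∀ t, 1 ≤ t → x t ∈ Θ := by
    intro t ht
    match t, ht with
    | 1, _ => exact hx1Θ
    | (s+2), _ =>
      rw [show s + 2 = (s+1) + 1 from rfl, hxrec (s+1) (by omega),
        hxplus (s+1) (k (s+1)) (by omega)]
      exact hprojΘ _
  -- subgradient sign
  have hgsign : ∀ t, 1 ≤ t → 0 ≤ ⟪g t, x t - xstar⟫ := by
    intro t ht
    have h1 := hg t ht xstar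
    have h2 := hmin (x t) (hxΘ t ht)
    have heq : ⟪g t, x t - xstar⟫ = -⟪g t, xstar - x t⟫ := by
      rw [← inner_neg_right]; congr 1; abel
    rw [heq]; linarith
  -- one-step expansion
  have hstep : ∀ t j, 1 ≤ t →
      ‖(x t - (γ j / h t) • g t) - xstar‖^2
        ≤ ‖x t - xstar‖^2 + γ j ^ 2 * ‖g t‖^2 / h t ^ 2 := by
    intro t j ht
    have hh := hhpos t ht
    have hexp : ‖(x t - (γ j / h t) • g t) - xstar‖^2
        = ‖x t - xstar‖^2 - 2*((γ j / h t)*⟪g t, x t - xstar⟫)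
          + (γ j / h t)^2 * ‖g t‖^2 := by
      rw [show (x t - (γ j / h t) • g t) - xstar = (x t - xstar) - (γ j / h t) • g t by abel]
      rw [norm_sub_sq_real, real_inner_smul_right, norm_smul, Real.norm_eq_abs, mul_pow,
        sq_abs, real_inner_comm]
      try ring
    have hsign := hgsign t ht
    have hc : 0 ≤ γ j / h t := div_nonneg (by rw [hγ]; positivity) hh.le
    have heq2 : (γ j / h t)^2 * ‖g t‖^2 = γ j ^2 * ‖g t‖^2 / h t ^2 := by
      rw [div_pow]; ring
    linarith [hexp, heq2, mul_nonneg hc hsign]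
  -- Γsq is nonnegative
  have hΓnn : ∀ t, 1 ≤ t → 0 ≤ Γsq t := by
    intro t ht
    induction t, ht using Nat.le_induction with
    | base => rw [hΓ1]
    | succ s hs ih =>
      rw [hΓrec s hs]
      have : (0:ℝ) ≤ γ (k s) ^ 2 * ‖g s‖^2 / h s ^ 2 := by positivity
      linarith [ih]
  -- distance invariant
  have hinv : ∀ t, 1 ≤ t → ‖x t - xstar‖^2 ≤ ‖x 1 - xstar‖^2 + Γsq t := by
    intro t ht
    induction t, ht using Nat.le_induction with
    | base => rw [hΓ1]; linarith
    | succ s hs ih =>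
      have hx' : x (s+1) = proj (x s - (γ (k s) / h s) • g s) := by
        rw [hxrec s hs, hxplus s (k s) hs]
      have h1 := projdec (x s - (γ (k s) / h s) • g s) xstar hxstarΘ
      rw [← hx'] at h1
      have h2 := hstep s (k s) hs
      rw [hΓrec s hs]
      linarith [ih]
  -- bound on candidate iterates
  have hxpb : ∀ t j, 1 ≤ t → ‖xplus t j - x 1‖
      ≤ 2*D + Real.sqrt (Γsq t + γ j ^ 2 * ‖g t‖ ^ 2 / h t ^ 2) := by
    intro t j ht
    have hR0 : 0 ≤ Γsq t + γ j ^ 2 * ‖g t‖ ^ 2 / h t ^ 2 := by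
      have := hΓnn t ht
      have h2 : (0:ℝ) ≤ γ j ^ 2 * ‖g t‖ ^ 2 / h t ^ 2 := by positivity
      linarith
    have h1 : ‖xplus t j - xstar‖^2 ≤ D^2 + (Γsq t + γ j ^ 2 * ‖g t‖ ^ 2 / h t ^ 2) := by
      rw [hxplus t j ht]
      have hp := projdec (x t - (γ j / h t) • g t) xstar hxstarΘ
      have h2 := hstep t j ht
      have h3 := hinv t ht
      have hD1 : ‖x 1 - xstar‖ ≤ D := le_max_left _ _
      nlinarith [norm_nonneg (x 1 - xstar)]
    have h4 : ‖xplus t j - xstar‖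
        ≤ D + Real.sqrt (Γsq t + γ j ^ 2 * ‖g t‖ ^ 2 / h t ^ 2) := by
      have h5 : ‖xplus t j - xstar‖
          ≤ Real.sqrt (D^2 + (Γsq t + γ j ^ 2 * ‖g t‖ ^ 2 / h t ^ 2)) := by
        rw [show ‖xplus t j - xstar‖ = Real.sqrt (‖xplus t j - xstar‖^2) from
          (Real.sqrt_sq (norm_nonneg _)).symm]
        exact Real.sqrt_le_sqrt h1
      have h6 : Real.sqrt (D^2 + (Γsq t + γ j ^ 2 * ‖g t‖ ^ 2 / h t ^ 2))
          ≤ D + Real.sqrt (Γsq t + γ j ^ 2 * ‖g t‖ ^ 2 / h t ^ 2) := by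
        rw [show D + Real.sqrt (Γsq t + γ j ^ 2 * ‖g t‖ ^ 2 / h t ^ 2)
            = Real.sqrt ((D + Real.sqrt (Γsq t + γ j ^ 2 * ‖g t‖ ^ 2 / h t ^ 2))^2) from
          (Real.sqrt_sq (by positivity)).symm]
        apply Real.sqrt_le_sqrt
        nlinarith [Real.sq_sqrt hR0, Real.sqrt_nonneg (Γsq t + γ j ^ 2 * ‖g t‖ ^ 2 / h t ^ 2),
          hD0.le]
      linarith
    have htri : ‖xplus t j - x 1‖ ≤ ‖xplus t j - xstar‖ + ‖xstar - x 1‖ := by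
      simpa [dist_eq_norm] using dist_triangle (xplus t j) xstar (x 1)
    have hx1D : ‖xstar - x 1‖ ≤ D := by rw [norm_sub_rev]; exact le_max_left _ _
    linarith
  -- k t ≥ 1
  have hk1 : ∀ t, 1 ≤ k t := by
    intro t
    induction t with
    | zero => omega
    | succ s ih =>
      have := hkmono (s+1) (by omega)
      simpa using le_trans ih this
  -- failed test implies step-size bound
  have hfail : ∀ j, 1 ≤ j → (∃ t, 1 ≤ t ∧ k (t-1) ≤ j ∧ j < k t) →
      γ₀ * 2 ^ j < D * Real.sqrt j := by
    rintro j hj ⟨t, ht, hj1, hj2⟩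
    have hBlt := hkmin t ht j hj1 hj2
    have hub := hxpb t j ht
    rw [hB t j ht] at hBlt
    have hsq : 2 * γ j / Real.sqrt j < 2 * D := by linarith
    have hjpos : (0:ℝ) < (j:ℝ) := by exact_mod_cast hj
    have hsj : 0 < Real.sqrt j := Real.sqrt_pos.mpr hjpos
    rw [div_lt_iff₀ hsj] at hsq
    rw [hγ j] at hsq
    linarith
  rcases Nat.lt_or_ge (k T) 2 with hkT | hkT
  · -- k T = 1
    have hkT1 : k T = 1 := le_antisymm (by omega) (hk1 T)
    refine ⟨?_, ?_, fun _ => hkT1⟩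
    · rw [hkT1]; push_cast; linarith
    · rw [hkT1, hγ 1]
      have h2 : (2:ℝ) ≤ 2 ^ kstar := by
        calc (2:ℝ) = 2^1 := (pow_one 2).symm
          _ ≤ 2^kstar := pow_le_pow_right₀ one_le_two hkstar1
      nlinarith
  · set m := k T - 1 with hmdef
    have hm1 : 1 ≤ m := by omega
    have hmT : k T = m + 1 := by omega
    have hex : ∃ t, m < k t := ⟨T, by omega⟩
    set t₀ := Nat.find hex with ht₀
    have hPt₀ : m < k t₀ := Nat.find_spec hex
    have ht₀1 : 1 ≤ t₀ := by
      by_contra hc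
      have h0 : t₀ = 0 := by omega
      rw [h0, hk0] at hPt₀; omega
    have hprev : ¬ m < k (t₀ - 1) := Nat.find_min hex (by omega)
    push_neg at hprev
    have hfailm := hfail m hm1 ⟨t₀, ht₀1, hprev, hPt₀⟩
    have hDub : D ≤ γ₀ * 2 ^ kstar := hkstar_ub
    have hmpos : (0:ℝ) < (m:ℝ) := by exact_mod_cast hm1
    have hsm : 0 < Real.sqrt m := Real.sqrt_pos.mpr hmpos
    have hmain : (2:ℝ) ^ m < 2 ^ kstar * Real.sqrt m := by
      have h1 : γ₀ * 2 ^ m < γ₀ * (2 ^ kstar * Real.sqrt m) := by nlinarith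
      have := (mul_lt_mul_iff_right₀ hγ₀).mp h1
      exact this
    obtain ⟨hc1, hc2⟩ := fa_aux_main m kstar hm1 hkstar1 hmain
    refine ⟨?_, ?_, ?_⟩
    · have hcast : (k T : ℝ) = (m:ℝ) + 1 := by exact_mod_cast hmT
      rw [hcast]; linarith
    · rw [hγ, hmT]
      have hsm25 : Real.sqrt m ≤ (5/4) * Real.sqrt kstar := by
        rw [show (5/4) * Real.sqrt kstar = Real.sqrt ((5/4)^2 * kstar) by
          rw [Real.sqrt_mul (by norm_num), Real.sqrt_sq (by norm_num)]]
        apply Real.sqrt_le_sqrt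
        nlinarith
      have hDs : D * Real.sqrt m ≤ (γ₀ * 2 ^ kstar) * ((5/4) * Real.sqrt kstar) :=
        mul_le_mul hDub hsm25 hsm.le (by positivity)
      calc γ₀ * 2 ^ (m+1) = 2 * (γ₀ * 2 ^ m) := by rw [pow_succ]; ring
        _ ≤ 2 * (D * Real.sqrt m) := by linarith
        _ ≤ 2 * ((γ₀ * 2 ^ kstar) * ((5/4) * Real.sqrt kstar)) := by linarith
        _ = (5/2) * Real.sqrt kstar * (γ₀ * 2 ^ kstar) := by ring
    · intro hks1
      exfalso
      rw [hks1] at hc2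
      push_cast at hc2
      have hmle : m < 2 := by
        by_contra h'
        push_neg at h'
        have : (2:ℝ) ≤ (m:ℝ) := by exact_mod_cast h'
        linarith
      have hmeq : m = 1 := by omega
      rw [hmeq, hks1] at hmain
      norm_num [Real.sqrt_one] at hmain
end

section
/- Assume additionally that f is L-Lipschitz for some L > 0 (so every subgradient used satisfies ‖g_t‖ ≤ L), fix an integer T ≥ 1, and let Free AdaGrad be run with the constant sequence h_t = L·√T. Then, with D_{γ₀} = max(‖x₁ − x*‖, γ₀): Σ_{t=1}^T (f(x_t) − f(x*)) ≤ 12.3 · D_{γ₀} · L · √( T · log₂(2·D_{γ₀}/γ₀) ). -/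
open scoped RealInnerProductSpace



lemma my_sqrt_add_le (a b : ℝ) (ha : 0 ≤ a) (hb : 0 ≤ b) :
    Real.sqrt (a + b) ≤ Real.sqrt a + Real.sqrt b := by
  have h1 : a + b ≤ (Real.sqrt a + Real.sqrt b) ^ 2 := by
    have := Real.sq_sqrt ha
    have := Real.sq_sqrt hb
    have := Real.sqrt_nonneg a
    have := Real.sqrt_nonneg b
    nlinarith
  calc Real.sqrt (a + b) ≤ Real.sqrt ((Real.sqrt a + Real.sqrt b) ^ 2) :=
        Real.sqrt_le_sqrt h1
    _ = Real.sqrt a + Real.sqrt b := Real.sqrt_sq (by positivity)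

lemma my_sum_inv_sqrt (K : ℕ) :
    ∑ j ∈ Finset.Icc 1 K, (Real.sqrt j)⁻¹ ≤ 2 * Real.sqrt K := by
  induction K with
  | zero => simp
  | succ n ih =>
    rw [Finset.sum_Icc_succ_top (by omega)]
    have h1 : (Real.sqrt (n + 1))⁻¹ ≤ 2 * Real.sqrt (n+1) - 2 * Real.sqrt n := by
      have hs1 : (0:ℝ) < Real.sqrt (n+1) := Real.sqrt_pos.2 (by positivity)
      rw [inv_le_iff_one_le_mul₀ hs1]
      have h2 : Real.sqrt n * Real.sqrt (n+1) ≤ n + 1/2 := by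
        have : Real.sqrt n * Real.sqrt (n+1) = Real.sqrt (n * (n+1)) := (Real.sqrt_mul (by positivity) _).symm
        rw [this]
        have : Real.sqrt ((n:ℝ) * (n+1)) ≤ Real.sqrt ((n + 1/2)^2) := by
          apply Real.sqrt_le_sqrt; nlinarith
        rwa [Real.sqrt_sq (by positivity)] at this
      have hsq : Real.sqrt (n+1) * Real.sqrt (n+1) = (n:ℝ)+1 := Real.mul_self_sqrt (by positivity)
      nlinarith
    have := Real.sqrt_nonneg (n:ℝ)
    push_cast at h1 ⊢
    linarith [ih]

lemma my_geom (a K : ℕ) : ∑ j ∈ Finset.Icc a K, ((4:ℝ)⁻¹) ^ (j - a) ≤ 4/3 := by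
  rcases le_or_gt a K with hak | hak
  · have h1 : ∑ j ∈ Finset.Icc a K, ((4:ℝ)⁻¹) ^ (j - a) = ∑ m ∈ Finset.range (K - a + 1), ((4:ℝ)⁻¹) ^ m := by
      rw [Finset.sum_bij' (fun j _ => j - a) (fun m _ => m + a)]
      · intro j hj; simp at hj ⊢; omega
      · intro m hm; simp at hm ⊢; omega
      · intro j hj; simp at hj; omega
      · intro m hm; simp
      · intro j hj; rfl
    rw [h1]
    have h2 : ∑ m ∈ Finset.range (K - a + 1), ((4:ℝ)⁻¹) ^ m = (1 - (4:ℝ)⁻¹ ^ (K - a + 1)) / (1 - 4⁻¹) := by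
      rw [geom_sum_eq (by norm_num)]; ring_nf
    rw [h2]
    have : (0:ℝ) ≤ (4:ℝ)⁻¹ ^ (K - a + 1) := by positivity
    rw [div_le_iff₀ (by norm_num)]
    linarith
  · rw [Finset.Icc_eq_empty (by omega)]; norm_num

lemma my_abel (T : ℕ) (hT : 1 ≤ T) (c dd M : ℕ → ℝ) (D : ℝ)
    (hc0 : ∀ t, 1 ≤ t → 0 ≤ c t)
    (hcmono : ∀ t, 1 ≤ t → c (t + 1) ≤ c t)
    (hd1 : dd 1 = D)
    (hlow : ∀ t, 1 ≤ t → D ^ 2 - 2 * D * M t ≤ dd (t + 1) ^ 2) :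
    ∑ t ∈ Finset.Icc 1 T, c t * (dd t ^ 2 - dd (t + 1) ^ 2)
      ≤ 2 * D * (∑ t ∈ Finset.Icc 1 (T - 1), (c t - c (t + 1)) * M t + c T * M T) := by
  have aux : ∀ n, 1 ≤ n →
      ∑ t ∈ Finset.Icc 1 n, c t * (dd t ^ 2 - dd (t + 1) ^ 2) + c n * dd (n + 1) ^ 2
        ≤ c n * D ^ 2 + 2 * D * ∑ t ∈ Finset.Icc 1 (n - 1), (c t - c (t + 1)) * M t := by
    intro n hn
    induction n with
    | zero => omega
    | succ m ih =>
      rcases Nat.eq_or_lt_of_le hn with h1 | h1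
      · -- m + 1 = 1
        have hm : m = 0 := by omega
        subst hm
        simp [hd1]
        ring_nf
        simp
      · have hm : 1 ≤ m := by omega
        have hstep := ih hm
        rw [Finset.sum_Icc_succ_top (by omega : 1 ≤ m + 1)]
        have hccm : 0 ≤ c m - c (m + 1) := by linarith [hcmono m hm]
        have hlowm := hlow m hm
        have hkey : (c m - c (m + 1)) * (D ^ 2 - 2 * D * M m) ≤ (c m - c (m+1)) * dd (m + 1) ^ 2 :=
          mul_le_mul_of_nonneg_left hlowm hccm
        have hm1 : m - 1 + 1 = m := by omega
        have hsum : ∑ t ∈ Finset.Icc 1 (m + 1 - 1), (c t - c (t + 1)) * M t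
            = ∑ t ∈ Finset.Icc 1 (m - 1), (c t - c (t + 1)) * M t + (c m - c (m + 1)) * M m := by
          have h2 : m + 1 - 1 = (m - 1) + 1 := by omega
          rw [h2, Finset.sum_Icc_succ_top (by omega : 1 ≤ (m-1)+1), hm1]
        rw [hsum]
        nlinarith [hstep]
  have hfin := aux T hT
  have hlowT := hlow T hT
  have hcT := hc0 T hT
  nlinarith [mul_le_mul_of_nonneg_left hlowT hcT]

lemma my_proj_sq_le {d : ℕ} {Θ : Set (EuclideanSpace ℝ (Fin d))}
    (hΘcv : Convex ℝ Θ)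
    (proj : EuclideanSpace ℝ (Fin d) → EuclideanSpace ℝ (Fin d))
    (hprojΘ : ∀ z, proj z ∈ Θ)
    (hproj : ∀ z, ∀ y ∈ Θ, ‖z - proj z‖ ≤ ‖z - y‖)
    (z y : EuclideanSpace ℝ (Fin d)) (hy : y ∈ Θ) :
    ‖proj z - y‖ ^ 2 ≤ ‖z - y‖ ^ 2 := by
  set p := proj z with hp
  -- variational inequality : ⟪z - p, y - p⟫ ≤ 0
  have hvi : ⟪z - p, y - p⟫ ≤ 0 := by
    by_contra hcon
    push_neg at hcon
    have hyp : y ≠ p := by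
      intro hyp; rw [hyp] at hcon; simp at hcon
    have hnorm : (0:ℝ) < ‖y - p‖ ^ 2 := by
      have h0 : y - p ≠ 0 := sub_ne_zero.2 hyp
      have h1 : (0:ℝ) < ‖y - p‖ := norm_pos_iff.2 h0
      positivity
    set s : ℝ := min 1 (⟪z - p, y - p⟫ / ‖y - p‖ ^ 2) with hs
    have hs0 : 0 < s := lt_min one_pos (div_pos hcon hnorm)
    have hs1 : s ≤ 1 := min_le_left _ _
    have hmem : p + s • (y - p) ∈ Θ := by
      have := hΘcv (hprojΘ z) hy (a := 1 - s) (b := s) (by linarith) (le_of_lt hs0) (by ring)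
      convert this using 1
      module
    have hle := hproj z _ hmem
    have hsq : ‖z - p‖ ^ 2 ≤ ‖z - p - s • (y - p)‖ ^ 2 := by
      have h1 : z - (p + s • (y - p)) = z - p - s • (y - p) := by abel
      rw [← h1]
      have := hproj z _ hmem
      exact pow_le_pow_left₀ (norm_nonneg _) this 2
    have hexp : ‖z - p - s • (y - p)‖ ^ 2
        = ‖z - p‖ ^ 2 - 2 * ⟪z - p, s • (y - p)⟫ + ‖s • (y - p)‖ ^ 2 :=
      norm_sub_sq_real (z - p) (s • (y - p))
    rw [hexp, real_inner_smul_right, norm_smul, Real.norm_eq_abs, abs_of_pos hs0, mul_pow] at hsq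
    -- hsq : ‖z-p‖^2 ≤ ‖z-p‖^2 - 2*(s*⟪z-p,y-p⟫) + s^2*‖y-p‖^2
    have h2 : 2 * ⟪z - p, y - p⟫ ≤ s * ‖y - p‖ ^ 2 := by nlinarith
    have h3 : s * ‖y - p‖ ^ 2 ≤ ⟪z - p, y - p⟫ := by
      have : s ≤ ⟪z - p, y - p⟫ / ‖y - p‖ ^ 2 := min_le_right _ _
      calc s * ‖y - p‖ ^ 2 ≤ (⟪z - p, y - p⟫ / ‖y - p‖ ^ 2) * ‖y - p‖ ^ 2 :=
            mul_le_mul_of_nonneg_right this (le_of_lt hnorm)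
        _ = ⟪z - p, y - p⟫ := by field_simp; exact div_self (norm_pos_iff.2 (sub_ne_zero.2 hyp)).ne'
    linarith
  have hdecomp : ‖z - y‖ ^ 2 = ‖z - p‖ ^ 2 - 2 * ⟪z - p, y - p⟫ + ‖y - p‖ ^ 2 := by
    have h1 : z - y = (z - p) - (y - p) := by abel
    rw [h1, norm_sub_sq_real]
  have h4 : ‖p - y‖ = ‖y - p‖ := norm_sub_rev _ _
  rw [h4]
  nlinarith [sq_nonneg ‖z - p‖]

lemma my_pow_ratio (m : ℕ) : ((2:ℝ) ^ m) ^ 2 * ((4:ℝ)⁻¹) ^ m = 1 := by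
  induction m with
  | zero => norm_num
  | succ n ih =>
    have h1 : ((2:ℝ) ^ (n+1)) ^ 2 * ((4:ℝ)⁻¹) ^ (n+1)
        = (((2:ℝ) ^ n) ^ 2 * ((4:ℝ)⁻¹) ^ n) * (2 ^ 2 * 4⁻¹) := by
      rw [pow_succ, pow_succ]; ring
    rw [h1, ih]; norm_num

set_option maxHeartbeats 4000000 in
theorem free_adagrad_corollary_lipschitz
    {d : ℕ} {Θ : Set (EuclideanSpace ℝ (Fin d))}
    (hΘne : Θ.Nonempty) (hΘcl : IsClosed Θ) (hΘcv : Convex ℝ Θ)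
    {f : EuclideanSpace ℝ (Fin d) → ℝ}
    (hfconv : ConvexOn ℝ Set.univ f)
    {xstar : EuclideanSpace ℝ (Fin d)} (hxstarΘ : xstar ∈ Θ)
    (hmin : ∀ y ∈ Θ, f xstar ≤ f y)
    (proj : EuclideanSpace ℝ (Fin d) → EuclideanSpace ℝ (Fin d))
    (hprojΘ : ∀ z, proj z ∈ Θ)
    (hproj : ∀ z, ∀ y ∈ Θ, ‖z - proj z‖ ≤ ‖z - y‖)
    {γ₀ : ℝ} (hγ₀ : 0 < γ₀)
    (γ : ℕ → ℝ) (hγ : ∀ j, γ j = γ₀ * 2 ^ j)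
    (x g : ℕ → EuclideanSpace ℝ (Fin d)) (k : ℕ → ℕ) (Γsq : ℕ → ℝ)
    (hx1Θ : x 1 ∈ Θ)
    (hg : ∀ t, 1 ≤ t → ∀ y, f (x t) + ⟪g t, y - x t⟫ ≤ f y)
    (hk0 : k 0 = 1) (hΓ1 : Γsq 1 = 0)
    {L : ℝ} (hL : 0 < L)
    (hLip : ∀ y z, |f y - f z| ≤ L * ‖y - z‖)
    (T : ℕ) (hT : 1 ≤ T)
    (h : ℕ → ℝ) (hh : ∀ t, 1 ≤ t → h t = L * Real.sqrt T)
    (xplus : ℕ → ℕ → EuclideanSpace ℝ (Fin d))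
    (hxplus : ∀ t j, 1 ≤ t → xplus t j = proj (x t - (γ j / h t) • g t))
    (B : ℕ → ℕ → ℝ)
    (hB : ∀ t j, 1 ≤ t → B t j =
        2 * γ j / Real.sqrt j
          + Real.sqrt (Γsq t + γ j ^ 2 * ‖g t‖ ^ 2 / h t ^ 2))
    (hkmono : ∀ t, 1 ≤ t → k (t - 1) ≤ k t)
    (hksel : ∀ t, 1 ≤ t → ‖xplus t (k t) - x 1‖ ≤ B t (k t))
    (hkmin : ∀ t, 1 ≤ t → ∀ j, k (t - 1) ≤ j → j < k t →
        B t j < ‖xplus t j - x 1‖)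
    (hxrec : ∀ t, 1 ≤ t → x (t + 1) = xplus t (k t))
    (hΓrec : ∀ t, 1 ≤ t → Γsq (t + 1) = Γsq t + γ (k t) ^ 2 * ‖g t‖ ^ 2 / h t ^ 2) :
    ∑ t ∈ Finset.Icc 1 T, (f (x t) - f xstar)
      ≤ 12.3 * max ‖x 1 - xstar‖ γ₀ * L
          * Real.sqrt (T * Real.logb 2 (2 * max ‖x 1 - xstar‖ γ₀ / γ₀)) := by
  -- basic notation
  set D : ℝ := ‖x 1 - xstar‖ with hD
  set Db : ℝ := max D γ₀ with hDb
  set K : ℕ := k T with hK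
  set lam : ℝ := Real.logb 2 (2 * Db / γ₀) with hlam
  have hD0 : 0 ≤ D := norm_nonneg _
  have hDb0 : 0 < Db := lt_max_of_lt_right hγ₀
  have hDDb : D ≤ Db := le_max_left _ _
  have hγDb : γ₀ ≤ Db := le_max_right _ _
  have hT1R : (1:ℝ) ≤ (T:ℝ) := by exact_mod_cast hT
  have hTpos : (0:ℝ) < (T:ℝ) := by linarith
  have hsT : (0:ℝ) < Real.sqrt T := Real.sqrt_pos.2 hTpos
  have hsTsq : Real.sqrt T * Real.sqrt T = (T:ℝ) := Real.mul_self_sqrt (le_of_lt hTpos)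
  have hγpos : ∀ j, 0 < γ j := by
    intro j; rw [hγ]; positivity
  have hγmono : ∀ i j, i ≤ j → γ i ≤ γ j := by
    intro i j hij; rw [hγ, hγ]
    have : (2:ℝ) ^ i ≤ 2 ^ j := by
      apply pow_le_pow_right₀ (by norm_num) hij
    nlinarith [hγ₀]
  have hHpos : 0 < L * Real.sqrt T := by positivity
  -- monotonicity of k
  have hkm : ∀ a b, a ≤ b → k a ≤ k b := by
    intro a b hab
    induction b with
    | zero =>
      have : a = 0 := by omega
      rw [this]
    | succ n ih =>
      rcases Nat.eq_or_lt_of_le hab with h1 | h1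
      · exact h1 ▸ le_refl _
      · have h2 := hkmono (n + 1) (by omega)
        simp only [Nat.add_sub_cancel] at h2
        exact le_trans (ih (by omega)) h2
  have hk1 : ∀ t, 1 ≤ k t := by
    intro t
    have := hkm 0 t (Nat.zero_le _)
    omega
  have hK1 : 1 ≤ K := hk1 T
  have hsk : ∀ t : ℕ, (0:ℝ) < Real.sqrt (k t) :=
    fun t => Real.sqrt_pos.2 (by exact_mod_cast Nat.lt_of_lt_of_le Nat.zero_lt_one (hk1 t))
  -- gradient norms
  have hgle : ∀ t, 1 ≤ t → ‖g t‖ ≤ L := by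
    intro t ht
    have h1 := hg t ht (x t + g t)
    have h2 : x t + g t - x t = g t := by abel
    rw [h2] at h1
    have h3 : ⟪g t, g t⟫ = ‖g t‖ ^ 2 := real_inner_self_eq_norm_sq _
    rw [h3] at h1
    have h4 := hLip (x t + g t) (x t)
    have h5 : x t + g t - x t = g t := by abel
    rw [h5] at h4
    have h6 : f (x t + g t) - f (x t) ≤ L * ‖g t‖ := le_trans (le_abs_self _) h4
    have h7 : ‖g t‖ ^ 2 ≤ L * ‖g t‖ := by linarith
    rcases eq_or_lt_of_le (norm_nonneg (g t)) with h8 | h8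
    · rw [← h8]; linarith
    · nlinarith
  -- membership
  have hxmem : ∀ t, 1 ≤ t → x t ∈ Θ := by
    intro t ht
    cases t with
    | zero => omega
    | succ n =>
      rcases Nat.eq_zero_or_pos n with h1 | h1
      · rw [h1]; exact hx1Θ
      · rw [hxrec n h1, hxplus n (k n) h1]
        exact hprojΘ _
  have hgap0 : ∀ t, 1 ≤ t → 0 ≤ f (x t) - f xstar := by
    intro t ht
    have := hmin (x t) (hxmem t ht)
    linarith
  have hginner : ∀ t, 1 ≤ t → f (x t) - f xstar ≤ ⟪g t, x t - xstar⟫ := by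
    intro t ht
    have h1 := hg t ht xstar
    have h2 : ⟪g t, xstar - x t⟫ = -⟪g t, x t - xstar⟫ := by
      rw [show xstar - x t = -(x t - xstar) by abel, inner_neg_right]
    rw [h2] at h1
    linarith
  -- the per-step inequality
  have hkey : ∀ t, 1 ≤ t → ∀ j : ℕ,
      ‖xplus t j - xstar‖ ^ 2
        ≤ ‖x t - xstar‖ ^ 2 - 2 * (γ j / (L * Real.sqrt T)) * (f (x t) - f xstar)
            + (γ j / (L * Real.sqrt T)) ^ 2 * ‖g t‖ ^ 2 := by
    intro t ht j
    set s : ℝ := γ j / (L * Real.sqrt T) with hs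
    have hsnn : 0 ≤ s := div_nonneg (le_of_lt (hγpos _)) (le_of_lt hHpos)
    have hhts : γ j / h t = s := by rw [hh t ht]
    rw [hxplus t j ht, hhts]
    have hcontr := my_proj_sq_le hΘcv proj hprojΘ hproj (x t - s • g t) xstar hxstarΘ
    have habel2 : x t - s • g t - xstar = (x t - xstar) - s • g t := by abel
    rw [habel2] at hcontr
    have hexp : ‖(x t - xstar) - s • g t‖ ^ 2
        = ‖x t - xstar‖ ^ 2 - 2 * (s * ⟪g t, x t - xstar⟫) + s ^ 2 * ‖g t‖ ^ 2 := by
      rw [norm_sub_sq_real, real_inner_smul_right, norm_smul, Real.norm_eq_abs, mul_pow, sq_abs,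
        real_inner_comm]
    rw [hexp] at hcontr
    have hgi := hginner t ht
    nlinarith [mul_le_mul_of_nonneg_left hgi hsnn]
  have hΓform : ∀ t, 1 ≤ t → Γsq t
      = ∑ s ∈ Finset.Icc 1 (t - 1), γ (k s) ^ 2 * ‖g s‖ ^ 2 / (L * Real.sqrt T) ^ 2 := by
    intro t ht
    induction t with
    | zero => omega
    | succ n ih =>
      rcases Nat.eq_or_lt_of_le ht with h1 | h1
      · rw [← h1]; simpa using hΓ1
      · have hn : 1 ≤ n := by omega
        rw [hΓrec n hn, ih hn, hh n hn]
        have h2 : n + 1 - 1 = (n - 1) + 1 := by omega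
        rw [h2, Finset.sum_Icc_succ_top (by omega : 1 ≤ (n-1)+1)]
        have h3 : n - 1 + 1 = n := by omega
        rw [h3]
  have hΓnn : ∀ t, 1 ≤ t → 0 ≤ Γsq t := by
    intro t ht
    rw [hΓform t ht]
    apply Finset.sum_nonneg
    intro s _
    positivity
  -- distance bound by induction
  have hdsq : ∀ t, 1 ≤ t → ‖x t - xstar‖ ^ 2 ≤ D ^ 2 + Γsq t := by
    intro t ht
    induction t with
    | zero => omega
    | succ n ih =>
      rcases Nat.eq_or_lt_of_le ht with h1 | h1
      · rw [← h1]; simp [hΓ1, hD]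
      · have hn : 1 ≤ n := by omega
        have h2 := hkey n hn (k n)
        have h3 := hgap0 n hn
        have hs : 0 ≤ γ (k n) / (L * Real.sqrt T) :=
          div_nonneg (le_of_lt (hγpos _)) (le_of_lt hHpos)
        have h4 : ‖x (n+1) - xstar‖ ^ 2
            ≤ ‖x n - xstar‖ ^ 2 + (γ (k n) / (L * Real.sqrt T)) ^ 2 * ‖g n‖ ^ 2 := by
          rw [hxrec n hn]
          nlinarith [h2]
        have h5 : (γ (k n) / (L * Real.sqrt T)) ^ 2 * ‖g n‖ ^ 2
            = γ (k n) ^ 2 * ‖g n‖ ^ 2 / (h n) ^ 2 := by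
          rw [hh n hn]; ring
        rw [hΓrec n hn]
        rw [h5] at h4
        linarith [ih hn]
  -- rejection implies small gamma
  have hrej : ∀ t j, 1 ≤ t → 1 ≤ j → B t j < ‖xplus t j - x 1‖ → γ j < D * Real.sqrt j := by
    intro t j ht hj hB'
    have hd2 := hdsq t ht
    have hk2 := hkey t ht j
    have hgap := hgap0 t ht
    have hsnn : 0 ≤ γ j / (L * Real.sqrt T) := div_nonneg (le_of_lt (hγpos _)) (le_of_lt hHpos)
    have hq : (γ j / (L * Real.sqrt T)) ^ 2 * ‖g t‖ ^ 2 = γ j ^ 2 * ‖g t‖ ^ 2 / h t ^ 2 := by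
      rw [hh t ht]; ring
    have h1 : ‖xplus t j - xstar‖ ^ 2 ≤ D ^ 2 + (Γsq t + γ j ^ 2 * ‖g t‖ ^ 2 / h t ^ 2) := by
      nlinarith [mul_le_mul_of_nonneg_left hgap hsnn, hk2, hq]
    have hΓq : 0 ≤ Γsq t + γ j ^ 2 * ‖g t‖ ^ 2 / h t ^ 2 := by
      have h2 : 0 ≤ γ j ^ 2 * ‖g t‖ ^ 2 / h t ^ 2 := by positivity
      linarith [hΓnn t ht]
    have h3 : ‖xplus t j - xstar‖ ≤ D + Real.sqrt (Γsq t + γ j ^ 2 * ‖g t‖ ^ 2 / h t ^ 2) := by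
      have h4 : ‖xplus t j - xstar‖ = Real.sqrt (‖xplus t j - xstar‖ ^ 2) :=
        (Real.sqrt_sq (norm_nonneg _)).symm
      rw [h4]
      calc Real.sqrt (‖xplus t j - xstar‖ ^ 2)
          ≤ Real.sqrt (D ^ 2 + (Γsq t + γ j ^ 2 * ‖g t‖ ^ 2 / h t ^ 2)) := Real.sqrt_le_sqrt h1
        _ ≤ Real.sqrt (D ^ 2) + Real.sqrt (Γsq t + γ j ^ 2 * ‖g t‖ ^ 2 / h t ^ 2) :=
            my_sqrt_add_le _ _ (sq_nonneg _) hΓq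
        _ = D + Real.sqrt (Γsq t + γ j ^ 2 * ‖g t‖ ^ 2 / h t ^ 2) := by
            rw [Real.sqrt_sq hD0]
    have h5 : ‖xplus t j - x 1‖ ≤ ‖xplus t j - xstar‖ + D := by
      have h6 := norm_sub_le_norm_sub_add_norm_sub (xplus t j) xstar (x 1)
      have h7 : ‖xstar - x 1‖ = D := by rw [hD, norm_sub_rev]
      rw [h7] at h6
      exact h6
    rw [hB t j ht] at hB'
    have h8 : 2 * γ j / Real.sqrt j < 2 * D := by
      have := lt_of_lt_of_le hB' h5
      linarith [h3]
    have hsj : (0:ℝ) < Real.sqrt j := Real.sqrt_pos.2 (by exact_mod_cast hj)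
    rw [div_lt_iff₀ hsj] at h8
    nlinarith
  -- every level below K was rejected at some time
  have hjrej : ∀ j, 1 ≤ j → j < K → γ j < D * Real.sqrt j := by
    intro j hj hjK
    have hP : ∃ t, j < k t := ⟨T, hjK⟩
    classical
    set t0 := Nat.find hP with ht0
    have hPt0 : j < k t0 := Nat.find_spec hP
    have ht01 : 1 ≤ t0 := by
      rcases Nat.eq_zero_or_pos t0 with h0 | h0
      · rw [h0, hk0] at hPt0; omega
      · exact h0
    have hprev : k (t0 - 1) ≤ j := by
      have : ¬ j < k (t0 - 1) := Nat.find_min hP (by omega)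
      omega
    exact hrej t0 j ht01 hj (hkmin t0 ht01 j hprev hPt0)
  -- gamma K bound
  have hγK : γ K ≤ 2 * Db * Real.sqrt K := by
    rcases Nat.eq_or_lt_of_le hK1 with h1 | h1
    · rw [← h1]
      have : γ 1 = 2 * γ₀ := by rw [hγ]; ring
      rw [this]
      simp only [Nat.cast_one, Real.sqrt_one]
      nlinarith
    · have h2 : 1 ≤ K - 1 := by omega
      have h3 := hjrej (K - 1) h2 (by omega)
      have h4 : γ K = 2 * γ (K - 1) := by
        rw [hγ, hγ]
        have h2K : (2:ℝ) ^ K = 2 ^ (K - 1) * 2 := by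
          rw [← pow_succ]; congr 1; omega
        rw [h2K]; ring
      have h5 : Real.sqrt (K - 1 : ℕ) ≤ Real.sqrt K := by
        apply Real.sqrt_le_sqrt
        exact_mod_cast Nat.sub_le K 1
      have h6 : D * Real.sqrt (K - 1 : ℕ) ≤ Db * Real.sqrt K := by
        apply mul_le_mul hDDb h5 (Real.sqrt_nonneg _) (le_of_lt hDb0)
      linarith
  -- K vs lambda
  have h2Db : (2:ℝ) ≤ 2 * Db / γ₀ := by
    rw [le_div_iff₀ hγ₀]
    nlinarith
  have hlam1 : 1 ≤ lam := by
    rw [hlam]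
    have h1 : Real.logb 2 2 = 1 := Real.logb_self_eq_one (by norm_num)
    rw [← h1]
    exact Real.logb_le_logb_of_le (by norm_num) (by norm_num) h2Db
  have hKlam : (K:ℝ) ≤ 2 * lam := by
    have hlog2 : (0:ℝ) < Real.log 2 := Real.log_pos (by norm_num)
    have hlamlog : lam = (Real.log 2 + Real.log Db - Real.log γ₀) / Real.log 2 := by
      rw [hlam, Real.logb, Real.log_div (by positivity) (ne_of_gt hγ₀),
        Real.log_mul (by norm_num) (ne_of_gt hDb0)]
    rcases Nat.eq_or_lt_of_le hK1 with h1 | h1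
    · rw [← h1]; push_cast; linarith
    · have h2 := hjrej (K - 1) (by omega) (by omega)
      have h3 : γ₀ * 2 ^ (K - 1) < Db * Real.sqrt K := by
        have h5 : Real.sqrt ((K:ℝ) - 1) ≤ Real.sqrt K := Real.sqrt_le_sqrt (by linarith)
        have h5' : ((K - 1 : ℕ):ℝ) = (K:ℝ) - 1 := by
          push_cast [Nat.cast_sub (by omega : 1 ≤ K)]; ring
        rw [hγ] at h2
        rw [h5'] at h2
        have h6 : D * Real.sqrt ((K:ℝ) - 1) ≤ Db * Real.sqrt K :=
          mul_le_mul hDDb h5 (Real.sqrt_nonneg _) (le_of_lt hDb0)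
        linarith
      have h4 : Real.log (γ₀ * 2 ^ (K - 1)) < Real.log (Db * Real.sqrt K) := by
        apply Real.log_lt_log (by positivity) h3
      have hKpos : (0:ℝ) < (K:ℝ) := by exact_mod_cast Nat.lt_of_lt_of_le Nat.zero_lt_one hK1
      rw [Real.log_mul (ne_of_gt hγ₀) (by positivity), Real.log_pow,
        Real.log_mul (ne_of_gt hDb0) (by positivity), Real.log_sqrt (le_of_lt hKpos)] at h4
      have h7 : Real.log K ≤ (K:ℝ) * Real.log 2 := by
        have h8 : (K:ℝ) ≤ 2 ^ K := by exact_mod_cast (@Nat.lt_two_pow_self K).le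
        calc Real.log K ≤ Real.log (2 ^ K) := Real.log_le_log hKpos h8
          _ = (K:ℝ) * Real.log 2 := by rw [Real.log_pow]
      have h9 : ((K - 1 : ℕ):ℝ) = (K:ℝ) - 1 := by
        push_cast [Nat.cast_sub (by omega : 1 ≤ K)]; ring
      rw [h9] at h4
      rw [hlamlog, ← mul_div_assoc, le_div_iff₀ hlog2]
      nlinarith
  -- definitions for the sums
  set c : ℕ → ℝ := fun t => L * Real.sqrt T / (2 * γ (k t)) with hc
  set M : ℕ → ℝ := fun t => B t (k t) with hM
  set dd : ℕ → ℝ := fun t => ‖x t - xstar‖ with hdd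
  have hcpos : ∀ t, 0 < c t := fun t => by
    simp only [hc]
    exact div_pos hHpos (by linarith [hγpos (k t)])
  have hMnn : ∀ t, 1 ≤ t → 0 ≤ M t := by
    intro t ht
    simp only [hM]
    rw [hB t (k t) ht]
    have := Real.sqrt_nonneg (Γsq t + γ (k t) ^ 2 * ‖g t‖ ^ 2 / h t ^ 2)
    have h2 : 0 ≤ 2 * γ (k t) / Real.sqrt (k t) := by
      have := hγpos (k t); have := hsk t; positivity
    linarith
  -- per-step regret bound
  have hstep : ∀ t, 1 ≤ t → f (x t) - f xstar
      ≤ c t * (dd t ^ 2 - dd (t + 1) ^ 2) + γ (k t) * L / (2 * Real.sqrt T) := by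
    intro t ht
    set s : ℝ := γ (k t) / (L * Real.sqrt T) with hs
    have hspos : 0 < s := div_pos (hγpos _) hHpos
    have h2 := hkey t ht (k t)
    have hdd1 : dd (t + 1) ^ 2 = ‖xplus t (k t) - xstar‖ ^ 2 := by
      simp only [hdd]; rw [hxrec t ht]
    have key2 : 2 * s * (f (x t) - f xstar) ≤ dd t ^ 2 - dd (t + 1) ^ 2 + s ^ 2 * ‖g t‖ ^ 2 := by
      show 2 * s * (f (x t) - f xstar)
        ≤ ‖x t - xstar‖ ^ 2 - ‖x (t + 1) - xstar‖ ^ 2 + s ^ 2 * ‖g t‖ ^ 2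
      rw [hxrec t ht]
      linarith [h2]
    have hgsq : ‖g t‖ ^ 2 ≤ L ^ 2 := by
      have := hgle t ht
      nlinarith [norm_nonneg (g t)]
    have hγne : γ (k t) ≠ 0 := ne_of_gt (hγpos _)
    have hLne : L ≠ 0 := ne_of_gt hL
    have hsTne : Real.sqrt T ≠ 0 := ne_of_gt hsT
    have e1 : c t * (2 * s) = 1 := by
      simp only [hc, hs]
      field_simp
    have e2 : (γ (k t) * L / (2 * Real.sqrt T)) * (2 * s) = s ^ 2 * L ^ 2 := by
      simp only [hs]
      field_simp
    nlinarith [key2, mul_le_mul_of_nonneg_left hgsq (le_of_lt (mul_pos (mul_pos hspos hspos) (by norm_num : (0:ℝ) < 1))), mul_pos hspos hspos, sq_nonneg s, hspos]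
  -- abel
  have hlow : ∀ t, 1 ≤ t → D ^ 2 - 2 * D * M t ≤ dd (t + 1) ^ 2 := by
    intro t ht
    have h1 : dd (t + 1) ≥ D - M t := by
      have h2 : ‖x (t + 1) - x 1‖ ≤ M t := by
        simp only [hM]
        rw [hxrec t ht]
        exact hksel t ht
      have h3 : D ≤ ‖x 1 - x (t+1)‖ + ‖x (t+1) - xstar‖ := by
        have := norm_sub_le_norm_sub_add_norm_sub (x 1) (x (t+1)) xstar
        simpa [hD] using this
      have h4 : ‖x 1 - x (t+1)‖ = ‖x (t+1) - x 1‖ := norm_sub_rev _ _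
      simp only [hdd]
      rw [h4] at h3
      linarith
    have hddnn : 0 ≤ dd (t + 1) := norm_nonneg _
    have hMt := hMnn t ht
    rcases le_total (M t) D with hMD | hMD
    · have h5 : 0 ≤ D - M t := by linarith
      have h6 : (D - M t) ^ 2 ≤ dd (t + 1) ^ 2 := by
        apply pow_le_pow_left₀ h5 (by linarith [h1]) 2
      nlinarith [hMt]
    · have h5 : D ^ 2 - 2 * D * M t ≤ 0 := by nlinarith [hD0, hMt, hMD]
      have h6 : 0 ≤ dd (t + 1) ^ 2 := sq_nonneg _
      linarith
  have habel : ∑ t ∈ Finset.Icc 1 T, c t * (dd t ^ 2 - dd (t + 1) ^ 2)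
      ≤ 2 * D * (∑ t ∈ Finset.Icc 1 (T - 1), (c t - c (t + 1)) * M t + c T * M T) := by
    apply my_abel T hT c dd M D
    · intro t _; exact le_of_lt (hcpos t)
    · intro t ht
      simp only [hc]
      apply div_le_div_of_nonneg_left (le_of_lt hHpos) (by linarith [hγpos (k t)])
      have h1 : k t ≤ k (t + 1) := by
        have := hkmono (t + 1) (by omega); simpa using this
      have := hγmono (k t) (k (t + 1)) h1
      linarith
    · rfl
    · exact hlow
  -- sum of per-step bounds
  have hsum1 : ∑ t ∈ Finset.Icc 1 T, (f (x t) - f xstar)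
      ≤ ∑ t ∈ Finset.Icc 1 T, c t * (dd t ^ 2 - dd (t + 1) ^ 2)
        + ∑ t ∈ Finset.Icc 1 T, γ (k t) * L / (2 * Real.sqrt T) := by
    rw [← Finset.sum_add_distrib]
    apply Finset.sum_le_sum
    intro t ht'
    simp only [Finset.mem_Icc] at ht'
    exact hstep t ht'.1
  have hsec : ∑ t ∈ Finset.Icc 1 T, γ (k t) * L / (2 * Real.sqrt T)
      ≤ Real.sqrt T * L * γ K / 2 := by
    have h1 : ∑ t ∈ Finset.Icc 1 T, γ (k t) * L / (2 * Real.sqrt T)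
        ≤ ∑ t ∈ Finset.Icc 1 T, γ K * L / (2 * Real.sqrt T) := by
      apply Finset.sum_le_sum
      intro t ht'
      simp only [Finset.mem_Icc] at ht'
      have h2 := hγmono (k t) K (hkm t T ht'.2)
      gcongr
    have h2 : ∑ t ∈ Finset.Icc 1 T, γ K * L / (2 * Real.sqrt T)
        = (T:ℝ) * (γ K * L / (2 * Real.sqrt T)) := by
      rw [Finset.sum_const, Nat.card_Icc, Nat.add_sub_cancel, nsmul_eq_mul]
    have h3 : (T:ℝ) * (γ K * L / (2 * Real.sqrt T)) = Real.sqrt T * L * γ K / 2 := by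
      nth_rewrite 1 [← hsTsq]
      rw [mul_div_assoc', div_eq_div_iff (mul_pos two_pos hsT).ne' two_ne_zero]
      ring
    rw [h2, h3] at h1
    exact h1
  classical
  set S : Finset ℕ := (Finset.Icc 1 T).filter (fun t => t = T ∨ k t < k (t + 1)) with hS
  have hTS : T ∈ S := by
    rw [hS]
    exact Finset.mem_filter.2 ⟨Finset.mem_Icc.2 ⟨hT, le_refl T⟩, Or.inl rfl⟩
  have hSmem : ∀ t ∈ S, 1 ≤ t ∧ t ≤ T := by
    intro t htS
    simp only [hS, Finset.mem_filter, Finset.mem_Icc] at htS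
    exact htS.1
  have hSlt : ∀ t1 ∈ S, ∀ t2 ∈ S, t1 < t2 → k t1 < k t2 := by
    intro t1 h1 t2 h2 h12
    simp only [hS, Finset.mem_filter, Finset.mem_Icc] at h1 h2
    rcases h1.2 with he | hlt
    · omega
    · exact lt_of_lt_of_le hlt (hkm (t1 + 1) t2 (by omega))
  have hSinj : ∀ t1 ∈ S, ∀ t2 ∈ S, k t1 = k t2 → t1 = t2 := by
    intro t1 h1 t2 h2 h12
    rcases lt_trichotomy t1 t2 with hlt | heq | hgt
    · exact absurd h12 (ne_of_lt (hSlt t1 h1 t2 h2 hlt))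
    · exact heq
    · exact absurd h12.symm (ne_of_lt (hSlt t2 h2 t1 h1 hgt))
  have hkleK : ∀ t ∈ S, 1 ≤ k t ∧ k t ≤ K := fun t htS => ⟨hk1 t, hkm t T (hSmem t htS).2⟩
  have hWS : ∑ t ∈ Finset.Icc 1 (T - 1), (c t - c (t + 1)) * M t + c T * M T
      ≤ ∑ t ∈ S, c t * M t := by
    have h1 : ∑ t ∈ Finset.Icc 1 (T - 1), (c t - c (t + 1)) * M t
        ≤ ∑ t ∈ (Finset.Icc 1 (T - 1)).filter (fun t => k t < k (t + 1)), c t * M t := by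
      rw [← Finset.sum_filter_add_sum_filter_not (Finset.Icc 1 (T - 1))
        (fun t => k t < k (t + 1))]
      have h2 : ∑ t ∈ (Finset.Icc 1 (T - 1)).filter (fun t => ¬ k t < k (t + 1)),
          (c t - c (t + 1)) * M t = 0 := by
        apply Finset.sum_eq_zero
        intro t htf
        simp only [Finset.mem_filter, Finset.mem_Icc] at htf
        have hke : k t = k (t + 1) := by
          have h4 := hkmono (t + 1) (by omega)
          simp only [Nat.add_sub_cancel] at h4
          omega
        have hct : c t = c (t + 1) := by simp only [hc, hke]
        rw [hct]; ring
      have h3 : ∑ t ∈ (Finset.Icc 1 (T - 1)).filter (fun t => k t < k (t + 1)),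
          (c t - c (t + 1)) * M t
          ≤ ∑ t ∈ (Finset.Icc 1 (T - 1)).filter (fun t => k t < k (t + 1)), c t * M t := by
        apply Finset.sum_le_sum
        intro t htf
        simp only [Finset.mem_filter, Finset.mem_Icc] at htf
        have hMt := hMnn t (by omega)
        have hct1 := (hcpos (t + 1)).le
        nlinarith
      linarith
    have h3 : (Finset.Icc 1 (T - 1)).filter (fun t => k t < k (t + 1)) ⊆ S.erase T := by
      intro t htf
      simp only [Finset.mem_filter, Finset.mem_Icc] at htf
      simp only [Finset.mem_erase, hS, Finset.mem_filter, Finset.mem_Icc]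
      exact ⟨by omega, ⟨⟨by omega, by omega⟩, Or.inr htf.2⟩⟩
    have h4 : ∑ t ∈ (Finset.Icc 1 (T - 1)).filter (fun t => k t < k (t + 1)), c t * M t
        ≤ ∑ t ∈ S.erase T, c t * M t := by
      apply Finset.sum_le_sum_of_subset_of_nonneg h3
      intro t htS _
      have ht1 := (hSmem t (Finset.mem_of_mem_erase htS)).1
      exact mul_nonneg (hcpos t).le (hMnn t ht1)
    have h5 : ∑ t ∈ S.erase T, c t * M t + c T * M T = ∑ t ∈ S, c t * M t :=
      Finset.sum_erase_add S _ hTS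
    linarith
  have hcM : ∀ t ∈ S, c t * M t
      ≤ L * Real.sqrt T * (Real.sqrt (k t))⁻¹
        + L * Real.sqrt T / 2 * (Real.sqrt (Γsq t) / γ (k t)) + L / 2 := by
    intro t htS
    obtain ⟨ht1, htT⟩ := hSmem t htS
    have hγne : γ (k t) ≠ 0 := ne_of_gt (hγpos _)
    have hskne : Real.sqrt (k t) ≠ 0 := ne_of_gt (hsk t)
    have hMeq : M t = 2 * γ (k t) / Real.sqrt (k t)
        + Real.sqrt (Γsq t + γ (k t) ^ 2 * ‖g t‖ ^ 2 / h t ^ 2) := by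
      simp only [hM]; exact hB t (k t) ht1
    have hq : γ (k t) ^ 2 * ‖g t‖ ^ 2 / h t ^ 2
        = (γ (k t) * ‖g t‖ / (L * Real.sqrt T)) ^ 2 := by
      rw [hh t ht1]; ring
    have hsq2 : Real.sqrt (Γsq t + γ (k t) ^ 2 * ‖g t‖ ^ 2 / h t ^ 2)
        ≤ Real.sqrt (Γsq t) + γ (k t) * ‖g t‖ / (L * Real.sqrt T) := by
      calc Real.sqrt (Γsq t + γ (k t) ^ 2 * ‖g t‖ ^ 2 / h t ^ 2)
          ≤ Real.sqrt (Γsq t) + Real.sqrt ((γ (k t) * ‖g t‖ / (L * Real.sqrt T)) ^ 2) := by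
            rw [hq]
            exact my_sqrt_add_le _ _ (hΓnn t ht1) (sq_nonneg _)
        _ = Real.sqrt (Γsq t) + γ (k t) * ‖g t‖ / (L * Real.sqrt T) := by
            rw [Real.sqrt_sq (div_nonneg (mul_nonneg (hγpos _).le (norm_nonneg _)) hHpos.le)]
    have hMle : M t ≤ 2 * γ (k t) / Real.sqrt (k t) + Real.sqrt (Γsq t)
        + γ (k t) * ‖g t‖ / (L * Real.sqrt T) := by
      rw [hMeq]; linarith
    have h1 : c t * M t ≤ c t * (2 * γ (k t) / Real.sqrt (k t) + Real.sqrt (Γsq t)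
        + γ (k t) * ‖g t‖ / (L * Real.sqrt T)) :=
      mul_le_mul_of_nonneg_left hMle (hcpos t).le
    have h2γ : (2 * γ (k t)) ≠ 0 := by positivity
    have e1 : c t * (2 * γ (k t) / Real.sqrt (k t)) = L * Real.sqrt T * (Real.sqrt (k t))⁻¹ := by
      simp only [hc]
      rw [div_mul_div_comm, mul_comm (L * Real.sqrt T) (2 * γ (k t)),
        mul_div_mul_left _ _ h2γ, div_eq_mul_inv]
    have e2 : c t * Real.sqrt (Γsq t)
        = L * Real.sqrt T / 2 * (Real.sqrt (Γsq t) / γ (k t)) := by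
      simp only [hc]
      rw [div_mul_eq_mul_div, div_mul_div_comm]
    have e3 : c t * (γ (k t) * ‖g t‖ / (L * Real.sqrt T)) = ‖g t‖ / 2 := by
      simp only [hc]
      rw [div_mul_div_comm, div_eq_div_iff (by positivity) (by norm_num : (2:ℝ) ≠ 0)]
      ring
    have h2 : ‖g t‖ / 2 ≤ L / 2 := by linarith [hgle t ht1]
    calc c t * M t ≤ c t * (2 * γ (k t) / Real.sqrt (k t) + Real.sqrt (Γsq t)
        + γ (k t) * ‖g t‖ / (L * Real.sqrt T)) := h1
      _ = L * Real.sqrt T * (Real.sqrt (k t))⁻¹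
          + L * Real.sqrt T / 2 * (Real.sqrt (Γsq t) / γ (k t)) + ‖g t‖ / 2 := by
          rw [mul_add, mul_add, e1, e2, e3]
      _ ≤ _ := by linarith
  -- image of k on S
  have himg1 : S.image k ⊆ Finset.Icc 1 K := by
    intro j hj
    simp only [Finset.mem_image] at hj
    obtain ⟨t, htS, rfl⟩ := hj
    exact Finset.mem_Icc.2 (hkleK t htS)
  have hS1 : ∑ t ∈ S, (Real.sqrt (k t))⁻¹ ≤ 2 * Real.sqrt K := by
    have h1 : ∑ j ∈ S.image k, (Real.sqrt j)⁻¹ = ∑ t ∈ S, (Real.sqrt (k t))⁻¹ :=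
      Finset.sum_image (fun t ht t' ht' => hSinj t ht t' ht')
    rw [← h1]
    calc ∑ j ∈ S.image k, (Real.sqrt j)⁻¹
        ≤ ∑ j ∈ Finset.Icc 1 K, (Real.sqrt j)⁻¹ := by
          apply Finset.sum_le_sum_of_subset_of_nonneg himg1
          intro j _ _
          positivity
      _ ≤ 2 * Real.sqrt K := my_sum_inv_sqrt K
  have hptw : ∀ t ∈ S, Γsq t / γ (k t) ^ 2
      ≤ ∑ s' ∈ Finset.Icc 1 T,
          (if s' < t then (1/(T:ℝ)) * ((4:ℝ)⁻¹) ^ (k t - k s') else 0) := by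
    intro t htS
    obtain ⟨ht1, htT⟩ := hSmem t htS
    rw [hΓform t ht1, Finset.sum_div]
    have hIcc : Finset.Icc 1 (t - 1) = (Finset.Icc 1 T).filter (fun s' => s' < t) := by
      ext a
      simp only [Finset.mem_Icc, Finset.mem_filter]
      omega
    rw [hIcc, Finset.sum_filter]
    apply Finset.sum_le_sum
    intro s' hs'
    simp only [Finset.mem_Icc] at hs'
    by_cases hst : s' < t
    · simp only [if_pos hst]
      have hks : k s' ≤ k t := hkm s' t (le_of_lt hst)
      have hratio : γ (k s') ^ 2 = γ (k t) ^ 2 * ((4:ℝ)⁻¹) ^ (k t - k s') := by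
        rw [hγ, hγ]
        have h2p : (2:ℝ) ^ (k t) = 2 ^ (k s') * 2 ^ (k t - k s') := by
          rw [← pow_add]
          congr 1
          omega
        rw [h2p]
        have hpr := my_pow_ratio (k t - k s')
        linear_combination (-(γ₀ * 2 ^ (k s')) ^ 2) * hpr
      have hgs2 : ‖g s'‖ ^ 2 ≤ L ^ 2 := by
        have := hgle s' hs'.1
        nlinarith [norm_nonneg (g s')]
      have hLT2 : (L * Real.sqrt T) ^ 2 = L ^ 2 * T := by
        rw [mul_pow, Real.sq_sqrt hTpos.le]
      rw [hratio, hLT2]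
      have hγt2 : (0:ℝ) < γ (k t) ^ 2 := by
        have := hγpos (k t); positivity
      have heq : γ (k t) ^ 2 * ((4:ℝ)⁻¹) ^ (k t - k s') * ‖g s'‖ ^ 2 / (L ^ 2 * (T:ℝ))
            / γ (k t) ^ 2
          = ((4:ℝ)⁻¹) ^ (k t - k s') * ‖g s'‖ ^ 2 / (L ^ 2 * (T:ℝ)) := by
        field_simp
        exact mul_div_cancel_left₀ _ (hγpos _).ne'
      rw [heq, div_le_iff₀ (by positivity)]
      have hr0 : (0:ℝ) ≤ ((4:ℝ)⁻¹) ^ (k t - k s') := by positivity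
      have : (1/(T:ℝ)) * ((4:ℝ)⁻¹) ^ (k t - k s') * (L ^ 2 * (T:ℝ))
          = ((4:ℝ)⁻¹) ^ (k t - k s') * L ^ 2 := by
        field_simp
      rw [this]
      exact mul_le_mul_of_nonneg_left hgs2 hr0
    · simp only [if_neg hst]
      exact le_refl 0
  have hS2sq : ∑ t ∈ S, Γsq t / γ (k t) ^ 2 ≤ 4/3 := by
    calc ∑ t ∈ S, Γsq t / γ (k t) ^ 2
        ≤ ∑ t ∈ S, ∑ s' ∈ Finset.Icc 1 T,
            (if s' < t then (1/(T:ℝ)) * ((4:ℝ)⁻¹) ^ (k t - k s') else 0) :=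
          Finset.sum_le_sum hptw
      _ = ∑ s' ∈ Finset.Icc 1 T, ∑ t ∈ S,
            (if s' < t then (1/(T:ℝ)) * ((4:ℝ)⁻¹) ^ (k t - k s') else 0) := Finset.sum_comm
      _ ≤ ∑ s' ∈ Finset.Icc 1 T, (1/(T:ℝ)) * (4/3) := by
          apply Finset.sum_le_sum
          intro s' hs'
          have h1 : ∑ t ∈ S, (if s' < t then (1/(T:ℝ)) * ((4:ℝ)⁻¹) ^ (k t - k s') else 0)
              = ∑ t ∈ S.filter (fun t => s' < t), (1/(T:ℝ)) * ((4:ℝ)⁻¹) ^ (k t - k s') :=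
            (Finset.sum_filter _ _).symm
          rw [h1, ← Finset.mul_sum]
          apply mul_le_mul_of_nonneg_left ?_ (by positivity)
          have hsub : S.filter (fun t => s' < t) ⊆ S := Finset.filter_subset _ _
          have h2 : ∑ j ∈ (S.filter (fun t => s' < t)).image k, ((4:ℝ)⁻¹) ^ (j - k s')
              = ∑ t ∈ S.filter (fun t => s' < t), ((4:ℝ)⁻¹) ^ (k t - k s') :=
            Finset.sum_image (fun t ht t' ht' =>
              hSinj t (hsub ht) t' (hsub ht'))
          rw [← h2]
          calc ∑ j ∈ (S.filter (fun t => s' < t)).image k, ((4:ℝ)⁻¹) ^ (j - k s')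
              ≤ ∑ j ∈ Finset.Icc (k s') K, ((4:ℝ)⁻¹) ^ (j - k s') := by
                apply Finset.sum_le_sum_of_subset_of_nonneg
                · intro j hj
                  simp only [Finset.mem_image, Finset.mem_filter] at hj
                  obtain ⟨t, ⟨htS, hst⟩, rfl⟩ := hj
                  exact Finset.mem_Icc.2
                    ⟨hkm s' t (le_of_lt hst), (hkleK t htS).2⟩
                · intro j _ _
                  positivity
            _ ≤ 4/3 := my_geom _ _
      _ ≤ 4/3 := by
          rw [Finset.sum_const, Nat.card_Icc, Nat.add_sub_cancel, nsmul_eq_mul]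
          have hTne : (T:ℝ) ≠ 0 := ne_of_gt hTpos
          have : (T:ℝ) * ((1/(T:ℝ)) * (4/3)) = 4/3 := by
            field_simp
          rw [this]
  have hcardK : (S.card : ℝ) ≤ (K : ℝ) := by
    have h1 : S.card = (S.image k).card :=
      (Finset.card_image_of_injOn (fun t ht t' ht' h => hSinj t ht t' ht' h)).symm
    have h2 : (S.image k).card ≤ (Finset.Icc 1 K).card := Finset.card_le_card himg1
    rw [Nat.card_Icc, Nat.add_sub_cancel] at h2
    exact_mod_cast h1 ▸ h2
  have hcardT : (S.card : ℝ) ≤ (T : ℝ) := by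
    have h2 : S.card ≤ (Finset.Icc 1 T).card := Finset.card_le_card (Finset.filter_subset _ _)
    rw [Nat.card_Icc, Nat.add_sub_cancel] at h2
    exact_mod_cast h2
  have hsumS2 : ∑ t ∈ S, Real.sqrt (Γsq t) / γ (k t) ≤ Real.sqrt ((K:ℝ) * (4/3)) := by
    have hann : ∀ t ∈ S, 0 ≤ Real.sqrt (Γsq t) / γ (k t) := fun t _ =>
      div_nonneg (Real.sqrt_nonneg _) (hγpos _).le
    have hcs : (∑ t ∈ S, Real.sqrt (Γsq t) / γ (k t)) ^ 2
        ≤ (S.card : ℝ) * ∑ t ∈ S, (Real.sqrt (Γsq t) / γ (k t)) ^ 2 :=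
      sq_sum_le_card_mul_sum_sq
    have ha2 : ∑ t ∈ S, (Real.sqrt (Γsq t) / γ (k t)) ^ 2 = ∑ t ∈ S, Γsq t / γ (k t) ^ 2 := by
      apply Finset.sum_congr rfl
      intro t ht
      rw [div_pow, Real.sq_sqrt (hΓnn t (hSmem t ht).1)]
    rw [ha2] at hcs
    have hsums2nn : 0 ≤ ∑ t ∈ S, Γsq t / γ (k t) ^ 2 := by
      apply Finset.sum_nonneg
      intro t ht
      have := hΓnn t (hSmem t ht).1
      have := hγpos (k t)
      positivity
    have h3 : (∑ t ∈ S, Real.sqrt (Γsq t) / γ (k t)) ^ 2 ≤ (K:ℝ) * (4/3) := by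
      calc (∑ t ∈ S, Real.sqrt (Γsq t) / γ (k t)) ^ 2
          ≤ (S.card : ℝ) * ∑ t ∈ S, Γsq t / γ (k t) ^ 2 := hcs
        _ ≤ (K:ℝ) * (4/3) := by
            apply mul_le_mul hcardK hS2sq hsums2nn (by positivity)
    have h4 := Real.sqrt_le_sqrt h3
    rw [Real.sqrt_sq (Finset.sum_nonneg hann)] at h4
    exact h4
  have hcardKT : (S.card : ℝ) ≤ Real.sqrt K * Real.sqrt T := by
    have hcnn : (0:ℝ) ≤ (S.card : ℝ) := by positivity
    have h1 : ((S.card : ℝ)) ^ 2 ≤ (K:ℝ) * (T:ℝ) := by nlinarith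
    have h2 := Real.sqrt_le_sqrt h1
    rw [Real.sqrt_sq hcnn, Real.sqrt_mul (by positivity)] at h2
    exact h2
  have hWfin : ∑ t ∈ S, c t * M t
      ≤ L * Real.sqrt T * (2 * Real.sqrt K)
        + L * Real.sqrt T / 2 * Real.sqrt ((K:ℝ) * (4/3))
        + L / 2 * (Real.sqrt K * Real.sqrt T) := by
    calc ∑ t ∈ S, c t * M t
        ≤ ∑ t ∈ S, (L * Real.sqrt T * (Real.sqrt (k t))⁻¹
            + L * Real.sqrt T / 2 * (Real.sqrt (Γsq t) / γ (k t)) + L / 2) :=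
          Finset.sum_le_sum hcM
      _ = L * Real.sqrt T * (∑ t ∈ S, (Real.sqrt (k t))⁻¹)
          + L * Real.sqrt T / 2 * (∑ t ∈ S, Real.sqrt (Γsq t) / γ (k t))
          + L / 2 * (S.card : ℝ) := by
          rw [Finset.sum_add_distrib, Finset.sum_add_distrib, ← Finset.mul_sum, ← Finset.mul_sum,
            Finset.sum_const, nsmul_eq_mul, mul_comm ((S.card : ℕ):ℝ) (L/2)]
      _ ≤ _ := by
          have c1 : (0:ℝ) ≤ L * Real.sqrt T := hHpos.le
          have c2 : (0:ℝ) ≤ L * Real.sqrt T / 2 := by positivity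
          have c3 : (0:ℝ) ≤ L / 2 := by positivity
          exact add_le_add (add_le_add (mul_le_mul_of_nonneg_left hS1 c1)
            (mul_le_mul_of_nonneg_left hsumS2 c2)) (mul_le_mul_of_nonneg_left hcardKT c3)
  have hsqrt43 : Real.sqrt ((K:ℝ) * (4/3)) ≤ Real.sqrt K * 1.16 := by
    rw [Real.sqrt_mul (by positivity)]
    have h1 : Real.sqrt (4/3 : ℝ) ≤ 1.16 := by
      have h2 := Real.sq_sqrt (by norm_num : (0:ℝ) ≤ 4/3)
      have h3 := Real.sqrt_nonneg (4/3 : ℝ)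
      nlinarith
    exact mul_le_mul_of_nonneg_left h1 (Real.sqrt_nonneg _)
  have hsK : (0:ℝ) ≤ Real.sqrt K := Real.sqrt_nonneg _
  have hWb : ∑ t ∈ S, c t * M t ≤ 3.08 * (L * (Real.sqrt T * Real.sqrt K)) := by
    have h43 := mul_le_mul_of_nonneg_left hsqrt43
      (by positivity : (0:ℝ) ≤ L * Real.sqrt T / 2)
    nlinarith [hWfin, hHpos.le, hsT.le, hL.le]
  have h1 : ∑ t ∈ Finset.Icc 1 T, (f (x t) - f xstar)
      ≤ 2 * D * (∑ t ∈ S, c t * M t) + Real.sqrt T * L * γ K / 2 := by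
    have h2 : 2 * D * (∑ t ∈ Finset.Icc 1 (T - 1), (c t - c (t + 1)) * M t + c T * M T)
        ≤ 2 * D * (∑ t ∈ S, c t * M t) :=
      mul_le_mul_of_nonneg_left hWS (by linarith)
    linarith [hsum1, hsec, habel]
  have hγKb : Real.sqrt T * L * γ K / 2 ≤ Db * L * (Real.sqrt T * Real.sqrt K) := by
    have h2 := mul_le_mul_of_nonneg_left hγK
      (by positivity : (0:ℝ) ≤ Real.sqrt T * L / 2)
    nlinarith [hsT.le, hL.le]
  have hDW : 2 * D * (∑ t ∈ S, c t * M t) ≤ 2 * Db * (3.08 * (L * (Real.sqrt T * Real.sqrt K))) := by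
    calc 2 * D * (∑ t ∈ S, c t * M t)
        ≤ 2 * D * (3.08 * (L * (Real.sqrt T * Real.sqrt K))) :=
          mul_le_mul_of_nonneg_left hWb (by linarith)
      _ ≤ 2 * Db * (3.08 * (L * (Real.sqrt T * Real.sqrt K))) := by
          have hnn : (0:ℝ) ≤ 3.08 * (L * (Real.sqrt T * Real.sqrt K)) := by positivity
          nlinarith
  have hfin1 : ∑ t ∈ Finset.Icc 1 T, (f (x t) - f xstar)
      ≤ 7.16 * Db * L * (Real.sqrt T * Real.sqrt K) := by
    have e : 2 * Db * (3.08 * (L * (Real.sqrt T * Real.sqrt K)))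
        + Db * L * (Real.sqrt T * Real.sqrt K)
        = 7.16 * Db * L * (Real.sqrt T * Real.sqrt K) := by ring
    linarith
  have hsqKlam : Real.sqrt K ≤ 1.415 * Real.sqrt lam := by
    have hl1 : Real.sqrt K ≤ Real.sqrt (2 * lam) := Real.sqrt_le_sqrt hKlam
    rw [Real.sqrt_mul (by norm_num : (0:ℝ) ≤ 2)] at hl1
    have h2 : Real.sqrt 2 ≤ 1.415 := by
      have h3 := Real.sq_sqrt (by norm_num : (0:ℝ) ≤ 2)
      have h4 := Real.sqrt_nonneg (2:ℝ)
      nlinarith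
    have h5 : Real.sqrt 2 * Real.sqrt lam ≤ 1.415 * Real.sqrt lam :=
      mul_le_mul_of_nonneg_right h2 (Real.sqrt_nonneg _)
    linarith
  have hrhs : Real.sqrt ((T:ℝ) * lam) = Real.sqrt T * Real.sqrt lam :=
    Real.sqrt_mul hTpos.le _
  have hslam : (0:ℝ) ≤ Real.sqrt lam := Real.sqrt_nonneg _
  calc ∑ t ∈ Finset.Icc 1 T, (f (x t) - f xstar)
      ≤ 7.16 * Db * L * (Real.sqrt T * Real.sqrt K) := hfin1
    _ ≤ 7.16 * Db * L * (Real.sqrt T * (1.415 * Real.sqrt lam)) := by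
        apply mul_le_mul_of_nonneg_left
          (mul_le_mul_of_nonneg_left hsqKlam hsT.le)
          (by positivity)
    _ ≤ 12.3 * Db * L * Real.sqrt ((T:ℝ) * lam) := by
        rw [hrhs]
        nlinarith [mul_nonneg (mul_nonneg hDb0.le hL.le) (mul_nonneg hsT.le hslam)]
end

section
/- With D_{γ₀} = max(‖x₁ − x*‖, γ₀), the simple doubling variant of projected gradient descent satisfies Σ_{t=1}^T (f(x_t) − f(x*)) ≤ 3·‖x₁ − x*‖·L·√T·log₂(2·D_{γ₀}/γ₀) + 2·D_{γ₀}·L·√T. -/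
open scoped RealInnerProductSpace

lemma proj_vi_aux {E : Type*} [NormedAddCommGroup E] [InnerProductSpace ℝ E]
    {Θ : Set E} (hΘcv : Convex ℝ Θ)
    (proj : E → E) (hprojΘ : ∀ z, proj z ∈ Θ)
    (hproj : ∀ z, ∀ y ∈ Θ, ‖z - proj z‖ ≤ ‖z - y‖) :
    ∀ z, ∀ y ∈ Θ, ‖proj z - y‖ ≤ ‖z - y‖ := by
  intro z y hy
  set p := proj z with hp
  have hinner : ⟪z - p, y - p⟫ ≤ 0 := by
    by_contra hcon
    push_neg at hcon
    have hq0 : y - p ≠ 0 := by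
      intro h
      rw [h, inner_zero_right] at hcon
      exact lt_irrefl _ hcon
    have hq : (0:ℝ) < ‖y - p‖ ^ 2 := pow_pos (norm_pos_iff.mpr hq0) 2
    set ι : ℝ := ⟪z - p, y - p⟫ with hι
    set q : ℝ := ‖y - p‖ ^ 2 with hqq
    set θ : ℝ := min 1 (ι / q) with hθ
    have hθ0 : 0 < θ := lt_min one_pos (div_pos hcon hq)
    have hθ1 : θ ≤ 1 := min_le_left _ _
    have hθ2 : θ * q ≤ ι := by
      have h4 : θ ≤ ι / q := min_le_right _ _
      calc θ * q ≤ (ι / q) * q := by nlinarith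
        _ = ι := by field_simp
    have hw : p + θ • (y - p) ∈ Θ := by
      have h2 := hΘcv (hprojΘ z) hy (a := 1 - θ) (b := θ) (by linarith) (le_of_lt hθ0)
        (by ring)
      have : (1 - θ) • p + θ • y = p + θ • (y - p) := by
        rw [smul_sub]; module
      rwa [this] at h2
    have h1 : ‖z - p‖ ≤ ‖z - (p + θ • (y - p))‖ := hproj z _ hw
    have h2 : ‖z - (p + θ • (y - p))‖ ^ 2 = ‖z - p‖ ^ 2 - 2 * θ * ι + θ ^ 2 * q := by
      have h3 : z - (p + θ • (y - p)) = (z - p) - θ • (y - p) := by abel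
      rw [h3, norm_sub_sq_real, real_inner_smul_right, norm_smul]
      rw [hι, Real.norm_eq_abs, hqq]
      rw [mul_pow, sq_abs]
      ring
    have h4 : ‖z - p‖ ^ 2 ≤ ‖z - (p + θ • (y - p))‖ ^ 2 := by
      have := norm_nonneg (z - p)
      nlinarith
    nlinarith
  have hexp : ‖z - y‖ ^ 2 = ‖z - p‖ ^ 2 - 2 * ⟪z - p, y - p⟫ + ‖y - p‖ ^ 2 := by
    have h3 : z - y = (z - p) - (y - p) := by abel
    rw [h3, norm_sub_sq_real]
  have h5 : ‖p - y‖ ^ 2 ≤ ‖z - y‖ ^ 2 := by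
    have h6 : ‖p - y‖ = ‖y - p‖ := norm_sub_rev _ _
    rw [h6, hexp]
    nlinarith [norm_nonneg (z - p)]
  nlinarith [norm_nonneg (p - y), norm_nonneg (z - y)]

set_option maxHeartbeats 2000000 in
/-- simple doubling variant of projected gradient descent. -/
theorem simple_doubling_pgd_regret
    {d : ℕ} {Θ : Set (EuclideanSpace ℝ (Fin d))}
    (hΘne : Θ.Nonempty) (hΘcl : IsClosed Θ) (hΘcv : Convex ℝ Θ)
    {f : EuclideanSpace ℝ (Fin d) → ℝ}
    (hfconv : ConvexOn ℝ Set.univ f)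
    {L : ℝ} (hL : 0 < L)
    {xstar : EuclideanSpace ℝ (Fin d)} (hxstarΘ : xstar ∈ Θ)
    (hmin : ∀ y ∈ Θ, f xstar ≤ f y)
    (proj : EuclideanSpace ℝ (Fin d) → EuclideanSpace ℝ (Fin d))
    (hprojΘ : ∀ z, proj z ∈ Θ)
    (hproj : ∀ z, ∀ y ∈ Θ, ‖z - proj z‖ ≤ ‖z - y‖)
    {γ₀ : ℝ} (hγ₀ : 0 < γ₀)
    (γ : ℕ → ℝ) (hγ : ∀ j, γ j = γ₀ * 2 ^ j)
    (T : ℕ) (hT : 1 ≤ T)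
    (x g : ℕ → EuclideanSpace ℝ (Fin d)) (k : ℕ → ℕ)
    (hx1Θ : x 1 ∈ Θ)
    (hg : ∀ t, 1 ≤ t → ∀ y, f (x t) + ⟪g t, y - x t⟫ ≤ f y)
    (hgL : ∀ t, 1 ≤ t → ‖g t‖ ≤ L)
    (hk0 : k 0 = 1)
    (xplus : ℕ → ℕ → EuclideanSpace ℝ (Fin d))
    (hxplus : ∀ t j, 1 ≤ t →
        xplus t j = proj (x t - (γ j / (L * Real.sqrt T)) • g t))
    (hkmono : ∀ t, 1 ≤ t → k (t - 1) ≤ k t)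
    (hksel : ∀ t, 1 ≤ t → ‖xplus t (k t) - x 1‖ ≤ 3 * γ (k t))
    (hkmin : ∀ t, 1 ≤ t → ∀ j, k (t - 1) ≤ j → j < k t →
        3 * γ j < ‖xplus t j - x 1‖)
    (hxrec : ∀ t, 1 ≤ t → x (t + 1) = xplus t (k t)) :
    ∑ t ∈ Finset.Icc 1 T, (f (x t) - f xstar)
      ≤ 3 * ‖x 1 - xstar‖ * L * Real.sqrt T
            * Real.logb 2 (2 * max ‖x 1 - xstar‖ γ₀ / γ₀)
          + 2 * max ‖x 1 - xstar‖ γ₀ * L * Real.sqrt T := by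
  have hnonexp := proj_vi_aux hΘcv proj hprojΘ hproj
  have hTR : (1:ℝ) ≤ (T:ℝ) := by exact_mod_cast hT
  have hT0 : (0:ℝ) < T := by linarith
  set st := Real.sqrt (T:ℝ) with hst
  have hs1 : 1 ≤ st := by
    rw [hst, show (1:ℝ) = Real.sqrt 1 by simp]
    exact Real.sqrt_le_sqrt hTR
  have hs0 : 0 < st := lt_of_lt_of_le one_pos hs1
  have hss : st ^ 2 = (T:ℝ) := Real.sq_sqrt (le_of_lt hT0)
  set D := ‖x 1 - xstar‖ with hD
  have hD0 : 0 ≤ D := norm_nonneg _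
  set Dg := max D γ₀ with hDg
  have hDg0 : 0 < Dg := lt_of_lt_of_le hγ₀ (le_max_right _ _)
  have hDgD : D ≤ Dg := le_max_left _ _
  have hDgγ : γ₀ ≤ Dg := le_max_right _ _
  have hγpos : ∀ j, 0 < γ j := fun j => by rw [hγ]; positivity
  have hγmono : ∀ i j, i ≤ j → γ i ≤ γ j := by
    intro i j hij
    rw [hγ, hγ]
    have h2 : (2:ℝ)^i ≤ 2^j := pow_le_pow_right₀ one_le_two hij
    nlinarith
  have kmono : ∀ a b : ℕ, a ≤ b → k a ≤ k b := by
    intro a b hab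
    induction b with
    | zero =>
        have ha : a = 0 := by omega
        subst ha; exact le_rfl
    | succ n ih =>
        rcases Nat.lt_or_ge a (n+1) with h|h
        · have h1 : k a ≤ k n := ih (by omega)
          have h2 := hkmono (n+1) (by omega)
          simp only [Nat.add_sub_cancel] at h2
          omega
        · have ha : a = n + 1 := by omega
          subst ha; exact le_rfl
  have hkge1 : ∀ t, 1 ≤ k t := by
    intro t
    have := kmono 0 t (Nat.zero_le t)
    omega
  have hxmem : ∀ t, 1 ≤ t → x t ∈ Θ := by
    intro t ht
    match t, ht with
    | 1, _ => exact hx1Θ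
    | (u+2), _ =>
        rw [show u + 2 = (u+1) + 1 from rfl, hxrec (u+1) (by omega),
          hxplus (u+1) _ (by omega)]
        exact hprojΘ _
  have hr0 : ∀ t, 1 ≤ t → 0 ≤ f (x t) - f xstar := fun t ht =>
    sub_nonneg.mpr (hmin _ (hxmem t ht))
  have hLst : 0 < L * st := mul_pos hL hs0
  have hstep : ∀ t j, 1 ≤ t → ‖xplus t j - xstar‖ ≤ ‖x t - xstar‖ + γ j / st := by
    intro t j ht
    rw [hxplus t j ht]
    refine le_trans (hnonexp _ xstar hxstarΘ) ?_
    have h1 : x t - (γ j / (L * st)) • g t - xstar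
        = (x t - xstar) - (γ j / (L * st)) • g t := by abel
    rw [h1]
    refine le_trans (norm_sub_le _ _) ?_
    have hc0 : 0 ≤ γ j / (L * st) := le_of_lt (div_pos (hγpos j) hLst)
    have h2 : ‖(γ j / (L * st)) • g t‖ = (γ j / (L * st)) * ‖g t‖ := by
      rw [norm_smul, Real.norm_eq_abs, abs_of_nonneg hc0]
    have h3 : (γ j / (L * st)) * ‖g t‖ ≤ (γ j / (L * st)) * L :=
      mul_le_mul_of_nonneg_left (hgL t ht) hc0
    have h4 : (γ j / (L * st)) * L = γ j / st := by
      field_simp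
    rw [h2]
    linarith
  have hdesc : ∀ t, 1 ≤ t → ∀ j, ‖xplus t j - xstar‖^2
      ≤ ‖x t - xstar‖^2 - 2*(γ j/(L*st))*(f (x t) - f xstar) + (γ j)^2/T := by
    intro t ht j
    set c := γ j / (L * st) with hc
    have hc0 : 0 ≤ c := le_of_lt (div_pos (hγpos j) hLst)
    have hip : (f (x t) - f xstar) ≤ ⟪g t, x t - xstar⟫ := by
      have h1 := hg t ht xstar
      have h2 : ⟪g t, xstar - x t⟫ = -⟪g t, x t - xstar⟫ := by
        rw [← inner_neg_right]
        congr 1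
        abel
      rw [h2] at h1
      linarith
    have hz : ‖x t - c • g t - xstar‖^2
        = ‖x t - xstar‖^2 - 2*c*⟪g t, x t - xstar⟫ + c^2*‖g t‖^2 := by
      have h3 : x t - c • g t - xstar = (x t - xstar) - c • g t := by abel
      rw [h3, norm_sub_sq_real, real_inner_smul_right, real_inner_comm, norm_smul,
        Real.norm_eq_abs, mul_pow, sq_abs]
      ring
    have hcL : c^2 * ‖g t‖^2 ≤ (γ j)^2 / T := by
      have hgt := hgL t ht
      have hg2 : ‖g t‖^2 ≤ L^2 := by nlinarith [norm_nonneg (g t)]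
      have h5 : c^2*‖g t‖^2 ≤ c^2*L^2 := by nlinarith [sq_nonneg c]
      have h6 : c^2*L^2 = (γ j)^2/(st^2) := by
        rw [hc]
        field_simp
      rw [hss] at h6
      linarith
    have hmain : ‖xplus t j - xstar‖ ≤ ‖x t - c • g t - xstar‖ := by
      rw [hxplus t j ht]
      exact hnonexp _ _ hxstarΘ
    have hsq : ‖xplus t j - xstar‖^2 ≤ ‖x t - c • g t - xstar‖^2 :=
      pow_le_pow_left₀ (norm_nonneg _) hmain 2
    have h7 : 2*c*(f (x t) - f xstar) ≤ 2*c*⟪g t, x t - xstar⟫ := by nlinarith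
    rw [hz] at hsq
    linarith
  have hdesc' : ∀ t, 1 ≤ t → ‖x (t+1) - xstar‖^2
      ≤ ‖x t - xstar‖^2 - 2*(γ (k t)/(L*st))*(f (x t) - f xstar) + (γ (k t))^2/T := by
    intro t ht
    rw [hxrec t ht]
    exact hdesc t ht (k t)
  have hA : ∀ t, 1 ≤ t → ‖x t - xstar‖^2 ≤ D^2 + ((t:ℝ) - 1) * (γ (k (t-1)))^2 / T := by
    intro t ht
    induction t, ht using Nat.le_induction with
    | base => simp [← hD]
    | succ n hn ih =>
        have h1 := hdesc' n hn
        have h2 : ‖x (n+1) - xstar‖^2 ≤ ‖x n - xstar‖^2 + (γ (k n))^2/T := by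
          have := hr0 n hn
          have hcpos : 0 ≤ γ (k n)/(L*st) := le_of_lt (div_pos (hγpos (k n)) hLst)
          nlinarith
        have h3 : γ (k (n-1)) ≤ γ (k n) := hγmono _ _ (kmono _ _ (by omega))
        have h4 : ((n:ℝ) - 1) * (γ (k (n-1)))^2 ≤ ((n:ℝ) - 1) * (γ (k n))^2 := by
          have hn1 : (1:ℝ) ≤ (n:ℝ) := by exact_mod_cast hn
          exact mul_le_mul_of_nonneg_left
            (pow_le_pow_left₀ (hγpos _).le h3 2) (by linarith)
        have h5 : ((n+1:ℕ):ℝ) - 1 = (n:ℝ) := by push_cast; ring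
        simp only [Nat.add_sub_cancel, h5]
        have h6 : ((n:ℝ) - 1) * (γ (k (n-1)))^2 / T ≤ ((n:ℝ) - 1) * (γ (k n))^2 / T :=
          (div_le_div_iff_of_pos_right hT0).mpr h4
        have h7 : (n:ℝ) * (γ (k n))^2 / T = ((n:ℝ)-1) * (γ (k n))^2/T + (γ (k n))^2/T := by
          ring
        rw [h7]
        linarith
  have hx1d : ∀ t, 1 ≤ t → ‖x t - x 1‖ ≤ 3 * γ (k (t-1)) := by
    intro t ht
    match t, ht with
    | 1, _ =>
        simp only [sub_self, norm_zero]
        have := hγpos (k (1-1))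
        linarith
    | (u+2), _ =>
        rw [show u + 2 = (u+1) + 1 from rfl, hxrec (u+1) (by omega)]
        have := hksel (u+1) (by omega)
        simpa using this
  have hgap : ∀ t, 1 ≤ t → D^2 - ‖x t - xstar‖^2 ≤ 6 * γ (k (t-1)) * D := by
    intro t ht
    have ha := hx1d t ht
    have htri : D ≤ ‖x t - x 1‖ + ‖x t - xstar‖ := by
      have h1 : D = ‖(x 1 - x t) + (x t - xstar)‖ := by
        rw [hD]; congr 1; abel
      rw [h1]
      refine le_trans (norm_add_le _ _) ?_
      rw [norm_sub_rev (x 1) (x t)]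
    set N := ‖x t - xstar‖
    set a := ‖x t - x 1‖
    have hN0 : 0 ≤ N := norm_nonneg _
    have ha0 : 0 ≤ a := norm_nonneg _
    have hγ0 := hγpos (k (t-1))
    rcases le_or_gt N D with hc|hc
    · nlinarith
    · nlinarith
  have hpassed : ∀ t j, 1 ≤ t → t ≤ T → k (t-1) ≤ j → j < k t → γ j ≤ Dg := by
    intro t j ht htT hj1 hj2
    by_contra hcon
    push_neg at hcon
    have h1 := hkmin t ht j hj1 hj2
    have h2 : ‖xplus t j - x 1‖ ≤ ‖xplus t j - xstar‖ + D := by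
      have h3 : xplus t j - x 1 = (xplus t j - xstar) + (xstar - x 1) := by abel
      calc ‖xplus t j - x 1‖ ≤ ‖xplus t j - xstar‖ + ‖xstar - x 1‖ := by
            rw [h3]; exact norm_add_le _ _
        _ = ‖xplus t j - xstar‖ + D := by rw [norm_sub_rev xstar (x 1), ← hD]
    have h3 := hstep t j ht
    set N := ‖x t - xstar‖ with hN
    set e := γ j / st with he
    have hDj : D < γ j := lt_of_le_of_lt hDgD hcon
    have hN1 : 2 * γ j - e < N := by linarith
    have he1 : e ≤ γ j := div_le_self (hγpos j).le hs1
    have he0 : 0 ≤ e := le_of_lt (div_pos (hγpos j) hs0)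
    have hN0 : 0 ≤ N := norm_nonneg _
    have hN2 := hA t ht
    have hγkj : γ (k (t-1)) ≤ γ j := hγmono _ _ hj1
    have htT2 : (t:ℝ) ≤ (T:ℝ) := by exact_mod_cast htT
    have he2 : e^2 = (γ j)^2 / T := by rw [he, div_pow, hss]
    have h5 : ((t:ℝ)-1)*(γ (k (t-1)))^2 ≤ ((T:ℝ)-1)*(γ j)^2 := by
      have h6 : (γ (k (t-1)))^2 ≤ (γ j)^2 := by
        nlinarith [hγpos (k (t-1)), hγpos j]
      have h7 : (0:ℝ) ≤ (t:ℝ) - 1 := by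
        have : (1:ℝ) ≤ (t:ℝ) := by exact_mod_cast ht
        linarith
      nlinarith [sq_nonneg (γ j)]
    have hN3 : N^2 < 2*(γ j)^2 - e^2 := by
      have h8 : ((t:ℝ)-1)*(γ (k (t-1)))^2/T ≤ ((T:ℝ)-1)*(γ j)^2/T :=
        (div_le_div_iff_of_pos_right hT0).mpr h5
      have h9 : ((T:ℝ)-1)*(γ j)^2/T = (γ j)^2 - e^2 := by
        rw [he2]
        field_simp
      have h10 : D^2 < (γ j)^2 := by nlinarith
      rw [h9] at h8
      linarith
    have h11 : (2*γ j - e)^2 < N^2 := by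
      have : 0 < 2 * γ j - e := by linarith [hγpos j]
      nlinarith
    nlinarith [sq_nonneg (γ j - e)]
  have hK1 : ∀ t, t ≤ T → γ (k t) ≤ 2 * Dg := by
    intro t
    induction t with
    | zero =>
        intro _
        rw [hk0, hγ]
        norm_num
        linarith
    | succ n ih =>
        intro h
        have hkn : k n ≤ k (n+1) := by
          have := hkmono (n+1) (by omega)
          simpa using this
        rcases eq_or_lt_of_le hkn with heq|hlt
        · rw [← heq]; exact ih (by omega)
        · have hj2 : k n ≤ k (n+1) - 1 := by omega
          have hj3 : k (n+1) - 1 < k (n+1) := by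
            have := hkge1 (n+1)
            omega
          have hp := hpassed (n+1) (k (n+1) - 1) (by omega) h (by simpa using hj2) hj3
          have hrw : k (n+1) = (k (n+1) - 1) + 1 := by
            have := hkge1 (n+1)
            omega
          rw [hrw, hγ, pow_succ]
          rw [hγ] at hp
          nlinarith [pow_pos (two_pos (α := ℝ)) (k (n+1) - 1)]
  have hhalf : ∀ a b : ℕ, a ≤ b → 6*(1 - γ a / γ b) ≤ 3*((b:ℝ) - (a:ℝ)) := by
    intro a b hab
    have h2 : γ a / γ b = (2:ℝ)⁻¹ ^ (b - a) := by
      rw [hγ, hγ]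
      have h3 : (2:ℝ)^b = 2^a * 2^(b-a) := by
        rw [← pow_add]
        congr 1
        omega
      rw [h3, inv_pow]
      have h4 : (0:ℝ) < 2^a := by positivity
      have h5 : (0:ℝ) < 2^(b-a) := by positivity
      field_simp
    have hbern : (1:ℝ) + ((b-a : ℕ):ℝ) * (-1/2) ≤ (1 + (-1/2))^(b-a : ℕ) :=
      one_add_mul_le_pow (by norm_num) _
    have hcast : ((b - a : ℕ):ℝ) = (b:ℝ) - (a:ℝ) := by
      push_cast [hab]
      ring
    have h6 : ((1:ℝ) + (-1/2))^(b-a:ℕ) = (2:ℝ)⁻¹ ^ (b-a:ℕ) := by norm_num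
    rw [h6, hcast] at hbern
    rw [h2]
    linarith
  -- per-step regret bound
  have hstep2 : ∀ t, 1 ≤ t → (f (x t) - f xstar)
      ≤ L*st/(2*γ (k t)) * (‖x t - xstar‖^2 - ‖x (t+1) - xstar‖^2)
        + (L/(2*st)) * γ (k t) := by
    intro t ht
    have hd := hdesc' t ht
    have hγt := hγpos (k t)
    set r := f (x t) - f xstar with hr
    set A := ‖x t - xstar‖^2
    set B := ‖x (t+1) - xstar‖^2
    have key : 2*(γ (k t)/(L*st))*r ≤ A - B + (γ (k t))^2/T := by linarith
    have h2 : r * (2*γ (k t)) ≤ (A - B + (γ (k t))^2/T) * (L*st) := by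
      have h3 : 2*(γ (k t)/(L*st))*r = (r * (2*γ (k t))) / (L*st) := by
        field_simp
      rw [h3] at key
      exact (div_le_iff₀ hLst).mp key
    have h4 : (L*st/(2*γ (k t)) * (A - B) + (L/(2*st)) * γ (k t)) * (2*γ (k t))
        = (A - B + (γ (k t))^2/T) * (L*st) := by
      have hTst : (T:ℝ) = st * st := by nlinarith
      field_simp
      rw [hTst]
      ring
    have h5 : 0 < 2*γ (k t) := by linarith
    have h6 : r * (2*γ (k t))
        ≤ (L*st/(2*γ (k t)) * (A - B) + (L/(2*st)) * γ (k t)) * (2*γ (k t)) := by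
      rw [h4]
      exact h2
    exact le_of_mul_le_mul_right h6 h5
  -- main induction
  have hmainind : ∀ n, 1 ≤ n → n ≤ T →
      ∑ t ∈ Finset.Icc 1 n, (f (x t) - f xstar)
        ≤ L*st/(2*γ (k n)) * (D^2 - ‖x (n+1) - xstar‖^2)
          + 3*D*(L*st/2)*((k n : ℝ) - 1)
          + (L/(2*st)) * ∑ t ∈ Finset.Icc 1 n, γ (k t) := by
    intro n hn
    induction n, hn using Nat.le_induction with
    | base =>
        intro _
        simp only [Finset.Icc_self, Finset.sum_singleton]
        have h1 := hstep2 1 le_rfl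
        have h2 : 0 ≤ 3*D*(L*st/2)*((k 1 : ℝ) - 1) := by
          have := hkge1 1
          have h3 : (1:ℝ) ≤ (k 1 : ℝ) := by exact_mod_cast this
          have h4 : 0 ≤ L*st/2 := by positivity
          exact mul_nonneg (mul_nonneg (by linarith) h4) (by linarith)
        rw [← hD] at h1
        linarith
    | succ n hn ih =>
        intro hnT
        have ihh := ih (by omega)
        have hs2 := hstep2 (n+1) (by omega)
        have hsum : ∑ t ∈ Finset.Icc 1 (n+1), (f (x t) - f xstar)
            = ∑ t ∈ Finset.Icc 1 n, (f (x t) - f xstar) + (f (x (n+1)) - f xstar) :=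
          Finset.sum_Icc_succ_top (by omega) _
        have hsumγ : ∑ t ∈ Finset.Icc 1 (n+1), γ (k t)
            = ∑ t ∈ Finset.Icc 1 n, γ (k t) + γ (k (n+1)) :=
          Finset.sum_Icc_succ_top (by omega) _
        have hkk : k n ≤ k (n+1) := by
          have := hkmono (n+1) (by omega)
          simpa using this
        set γa := γ (k n) with hγa
        set γb := γ (k (n+1)) with hγb
        have hγa0 := hγpos (k n)
        have hγb0 := hγpos (k (n+1))
        have hγab : γa ≤ γb := hγmono _ _ hkk
        set A := ‖x (n+1) - xstar‖^2 with hAA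
        -- bridge
        have hbridge : L*st/(2*γa) * (D^2 - A)
            ≤ L*st/(2*γb) * (D^2 - A) + 3*D*(L*st/2)*((k (n+1) : ℝ) - (k n : ℝ)) := by
          have hkc : ((k n : ℝ)) ≤ ((k (n+1) : ℝ)) := by exact_mod_cast hkk
          rcases le_or_gt (D^2 - A) 0 with hneg|hpos
          · have h6 : L*st/(2*γb) ≤ L*st/(2*γa) := by
              apply div_le_div_of_nonneg_left (le_of_lt hLst) (by linarith) (by linarith)
            have h7 : L*st/(2*γa) * (D^2 - A) ≤ L*st/(2*γb) * (D^2 - A) :=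
              mul_le_mul_of_nonpos_right h6 hneg
            have h8 : 0 ≤ 3*D*(L*st/2)*((k (n+1) : ℝ) - (k n : ℝ)) := by
              have h9 : 0 ≤ L*st/2 := by positivity
              exact mul_nonneg (mul_nonneg (by linarith) h9) (by linarith)
            linarith
          · have hg6 : D^2 - A ≤ 6 * γa * D := by
              have := hgap (n+1) (by omega)
              simpa using this
            have hco : 0 ≤ 1/(2*γa) - 1/(2*γb) := by
              have h9 : 1/(2*γb) ≤ 1/(2*γa) := by
                apply div_le_div_of_nonneg_left (by norm_num) (by linarith) (by linarith)
              linarith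
            have h7 : (D^2 - A) * (1/(2*γa) - 1/(2*γb))
                ≤ (6*γa*D) * (1/(2*γa) - 1/(2*γb)) :=
              mul_le_mul_of_nonneg_right hg6 hco
            have h8 : (6*γa*D) * (1/(2*γa) - 1/(2*γb)) = (6*(1 - γa/γb)) * D / 2 := by
              field_simp
              linear_combination D * (mul_inv_cancel₀ (show γa ≠ 0 from ne_of_gt hγa0))
            have h9 := hhalf (k n) (k (n+1)) hkk
            have h10 : (6*(1 - γa/γb)) * D / 2 ≤ 3*((k (n+1):ℝ) - (k n:ℝ)) * D / 2 := by
              nlinarith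
            have h11 : (D^2 - A) * (1/(2*γa) - 1/(2*γb))
                ≤ 3*((k (n+1):ℝ) - (k n:ℝ)) * D / 2 := by linarith
            have h12 : L*st/(2*γa) * (D^2 - A) - L*st/(2*γb) * (D^2 - A)
                = (L*st) * ((D^2 - A) * (1/(2*γa) - 1/(2*γb))) := by
              field_simp
            have h13 : (L*st) * ((D^2 - A) * (1/(2*γa) - 1/(2*γb)))
                ≤ (L*st) * (3*((k (n+1):ℝ) - (k n:ℝ)) * D / 2) :=
              mul_le_mul_of_nonneg_left h11 (le_of_lt hLst)
            have h14 : (L*st) * (3*((k (n+1):ℝ) - (k n:ℝ)) * D / 2)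
                = 3*D*(L*st/2)*((k (n+1) : ℝ) - (k n : ℝ)) := by ring
            linarith
        rw [hsum, hsumγ]
        have hfin : 3*D*(L*st/2)*((k n : ℝ) - 1)
              + 3*D*(L*st/2)*((k (n+1) : ℝ) - (k n : ℝ))
            = 3*D*(L*st/2)*((k (n+1) : ℝ) - 1) := by ring
        nlinarith [ihh, hs2, hbridge]
  -- conclusion
  have hP := hmainind T hT le_rfl
  have hgapT : D^2 - ‖x (T+1) - xstar‖^2 ≤ 6 * γ (k T) * D := by
    have := hgap (T+1) (by omega)
    simpa using this
  have hγT0 := hγpos (k T)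
  have h1 : L*st/(2*γ (k T)) * (D^2 - ‖x (T+1) - xstar‖^2) ≤ 3*D*(L*st) := by
    have h2 : L*st/(2*γ (k T)) * (D^2 - ‖x (T+1) - xstar‖^2)
        ≤ L*st/(2*γ (k T)) * (6 * γ (k T) * D) :=
      mul_le_mul_of_nonneg_left hgapT (by positivity)
    have h3 : L*st/(2*γ (k T)) * (6 * γ (k T) * D) = 3*D*(L*st) := by
      field_simp
      ring
    linarith
  have hsumb : ∑ t ∈ Finset.Icc 1 T, γ (k t) ≤ (T:ℝ) * (2*Dg) := by
    calc ∑ t ∈ Finset.Icc 1 T, γ (k t) ≤ ∑ t ∈ Finset.Icc 1 T, (2*Dg) :=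
          Finset.sum_le_sum (fun i hi => hK1 i (Finset.mem_Icc.mp hi).2)
      _ = (T:ℝ) * (2*Dg) := by
          rw [Finset.sum_const, Nat.card_Icc]
          simp
  have h2 : (L/(2*st)) * ∑ t ∈ Finset.Icc 1 T, γ (k t) ≤ Dg * (L * st) := by
    have h3 : (L/(2*st)) * ((T:ℝ) * (2*Dg)) = Dg * (L * st) := by
      have hTst : (T:ℝ) = st * st := by nlinarith
      rw [hTst]
      field_simp
    have h4 : (L/(2*st)) * ∑ t ∈ Finset.Icc 1 T, γ (k t)
        ≤ (L/(2*st)) * ((T:ℝ) * (2*Dg)) :=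
      mul_le_mul_of_nonneg_left hsumb (by positivity)
    linarith
  set Λ := Real.logb 2 (2 * Dg / γ₀) with hΛ
  have hkT : (k T : ℝ) ≤ Λ := by
    have h3 : (2:ℝ)^(k T) ≤ 2*Dg/γ₀ := by
      rw [le_div_iff₀ hγ₀]
      have := hK1 T le_rfl
      rw [hγ] at this
      linarith [this]
    have h4 : (0:ℝ) < 2^(k T) := by positivity
    have h5 : Real.logb 2 ((2:ℝ)^(k T)) ≤ Λ := by
      rw [hΛ]
      exact Real.logb_le_logb_of_le (by norm_num) h4 h3
    rw [Real.logb_pow, Real.logb_self_eq_one (by norm_num : (1:ℝ) < 2)] at h5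
    simpa using h5
  have hΛ1 : 1 ≤ Λ := by
    have h3 : (2:ℝ) ≤ 2*Dg/γ₀ := by
      rw [le_div_iff₀ hγ₀]
      linarith
    have h5 : Real.logb 2 2 ≤ Λ := Real.logb_le_logb_of_le (by norm_num) (by norm_num) h3
    rwa [Real.logb_self_eq_one (by norm_num : (1:ℝ) < 2)] at h5
  have hgoal : ∑ t ∈ Finset.Icc 1 T, (f (x t) - f xstar)
      ≤ 3*D*(L*st) + 3*D*(L*st/2)*((k T : ℝ) - 1) + Dg * (L*st) := by
    linarith
  have hkT1 : (1:ℝ) ≤ (k T : ℝ) := by exact_mod_cast hkge1 T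
  have hDk : D * ((k T:ℝ) - 1) ≤ D * (Λ - 1) := by
    apply mul_le_mul_of_nonneg_left (by linarith) hD0
  have hDΛ : 0 ≤ D * (Λ - 1) := mul_nonneg hD0 (by linarith)
  have hfinal : 3*D*(L*st) + 3*D*(L*st/2)*((k T : ℝ) - 1) + Dg * (L*st)
      ≤ 3 * D * L * st * Λ + 2 * Dg * L * st := by
    nlinarith [mul_le_mul_of_nonneg_left hDk (le_of_lt hLst),
      mul_nonneg (le_of_lt hLst) hDΛ, mul_nonneg (le_of_lt hLst) (le_of_lt hDg0)]
  calc ∑ t ∈ Finset.Icc 1 T, (f (x t) - f xstar)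
      ≤ 3*D*(L*st) + 3*D*(L*st/2)*((k T : ℝ) - 1) + Dg * (L*st) := hgoal
    _ ≤ 3 * D * L * st * Λ + 2 * Dg * L * st := hfinal
end
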